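/- arXiv:2602.06874 — 2 statements merged into one kernel-verified Lean document; each statement's English description precedes it below -/
import Mathlib

section
/- For every positive integer c, if a graph G contains, as an induced subgraph, a proper subdivision of the wall W_{1×c²} (the 1-by-c² hexagonal grid, consisting of two horizontal paths P and Q joined by c²+1 vertical paths), then G has induced cycles of at least c distinct lengths, i.e., cl(G) ≥ c. -/
open SimpleGraph

namespace ClPaper

variable {V : Type}

/-- Two vertex sets are anticomplete: no edge of `G` has one end in each. -/
def Anticomplete (G : SimpleGraph V) (X Y : Set V) : Prop :=
  ∀ ⦃x⦄, x ∈ X → ∀ ⦃y⦄, y ∈ Y → ¬ G.Adj x y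

/-- `G` contains `H` as an induced subgraph. -/
def ContainsInduced (G : SimpleGraph V) {W : Type} (H : SimpleGraph W) : Prop :=
  Nonempty (H ↪g G)

/-- `G` has an induced cycle of length `n`. -/
def HasInducedCycleOfLength (G : SimpleGraph V) (n : ℕ) : Prop :=
  3 ≤ n ∧ ContainsInduced G (cycleGraph n)

/-- `G` has induced cycles of at least `c` distinct lengths, i.e. `cl(G) ≥ c`. -/
def ClAtLeast (G : SimpleGraph V) (c : ℕ) : Prop :=
  ∃ L : Finset ℕ, L.card = c ∧ ∀ n ∈ L, HasInducedCycleOfLength G n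

/-- `G` has an induced minor isomorphic to `H`: there are nonempty, pairwise disjoint,
connected branch sets, one for each vertex of `H`, such that two branch sets are joined
by an edge of `G` if and only if the corresponding vertices are adjacent in `H`. -/
def HasInducedMinor (G : SimpleGraph V) {W : Type} (H : SimpleGraph W) : Prop :=
  ∃ B : W → Set V,
    (∀ w, (B w).Nonempty) ∧
    (∀ w, (G.induce (B w)).Connected) ∧
    (∀ w w', w ≠ w' → Disjoint (B w) (B w')) ∧
    (∀ w w', w ≠ w' → (H.Adj w w' ↔ ∃ u ∈ B w, ∃ v ∈ B w', G.Adj u v))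

/-- `G` is `t`-tidy: no induced `K_{t+1}` and no induced `K_{t,t}`-minor. -/
def Tidy (G : SimpleGraph V) (t : ℕ) : Prop :=
  ¬ ContainsInduced G (completeGraph (Fin (t + 1))) ∧
  ¬ HasInducedMinor G (completeBipartiteGraph (Fin t) (Fin t))

/-- A walk that is an induced path of `G`. -/
def IsInducedPathWalk (G : SimpleGraph V) {a b : V} (p : G.Walk a b) : Prop :=
  p.IsPath ∧ ∀ u ∈ p.support, ∀ v ∈ p.support, G.Adj u v → s(u, v) ∈ p.edges

/-- The vertex set of a walk. -/
def suppSet {G : SimpleGraph V} {a b : V} (p : G.Walk a b) : Set V :=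
  {v | v ∈ p.support}

/-- The interior (internal vertices) of a walk. -/
def interiorSet {G : SimpleGraph V} {a b : V} (p : G.Walk a b) : Set V :=
  {v | v ∈ p.support ∧ v ≠ a ∧ v ≠ b}

/-- A `q`-banana with ends `x, z`: `q` pairwise internally disjoint induced `x`–`z` paths. -/
def IsBanana (G : SimpleGraph V) {q : ℕ} {x z : V} (P : Fin q → G.Walk x z) : Prop :=
  x ≠ z ∧ Function.Injective P ∧
  (∀ i, IsInducedPathWalk G (P i)) ∧
  (∀ i j, i ≠ j → ∀ v, v ∈ (P i).support → v ∈ (P j).support → v = x ∨ v = z)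

/-- The vertex set of a banana (or theta). -/
def bananaVerts {G : SimpleGraph V} {q : ℕ} {x z : V} (P : Fin q → G.Walk x z) : Set V :=
  ⋃ i, suppSet (P i)

/-- A `q`-theta: a banana whose path interiors are pairwise anticomplete. -/
def IsTheta (G : SimpleGraph V) {q : ℕ} {x z : V} (P : Fin q → G.Walk x z) : Prop :=
  IsBanana G P ∧
  ∀ i j, i ≠ j → Anticomplete G (interiorSet (P i)) (interiorSet (P j))

/-- A rigid banana: no two path interiors are anticomplete. -/
def IsRigidBanana (G : SimpleGraph V) {q : ℕ} {x z : V} (P : Fin q → G.Walk x z) : Prop :=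
  IsBanana G P ∧
  ∀ i j, i ≠ j → ¬ Anticomplete G (interiorSet (P i)) (interiorSet (P j))

/-- An `l`-dense banana: its vertex set contains no `l`-theta with the same ends. -/
def IsDenseBanana (G : SimpleGraph V) (l : ℕ) {q : ℕ} {x z : V}
    (P : Fin q → G.Walk x z) : Prop :=
  IsBanana G P ∧
  ¬ ∃ Q : Fin l → G.Walk x z, IsTheta G Q ∧ bananaVerts Q ⊆ bananaVerts P

/-- The number of neighbours of `v` inside the set `A`; this is the degree of `v`
in the subgraph of `G` induced by `A ∪ {v}`. -/
noncomputable def degIn (G : SimpleGraph V) (A : Set V) (v : V) : ℕ :=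
  (A ∩ G.neighborSet v).ncard

/-- `S` induces a subdivided star in `G` with root `x` and leaf set `L`:
a tree with exactly one vertex of degree at least three. -/
def IsSubdividedStar (G : SimpleGraph V) (S : Set V) (x : V) (L : Set V) : Prop :=
  x ∈ S ∧ L ⊆ S ∧ (G.induce S).IsTree ∧
  3 ≤ degIn G S x ∧
  (∀ v ∈ S, v ≠ x → degIn G S v ≤ 2) ∧
  (∀ v, v ∈ L ↔ v ∈ S ∧ degIn G S v = 1)

/-- An `(s,d)`-dome with root `x`, all of whose vertices lie in `A`. -/
def IsDomeIn (G : SimpleGraph V) (A : Set V) (s d : ℕ) (x : V) : Prop :=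
  ∃ (S L : Set V) (a b : V) (P : G.Walk a b),
    S ⊆ A ∧ suppSet P ⊆ A ∧
    IsSubdividedStar G S x L ∧ L.ncard = s ∧
    IsInducedPathWalk G P ∧
    Disjoint S (suppSet P) ∧
    Anticomplete G (S \ L) (suppSet P) ∧
    (∀ v ∈ L, ∃ u ∈ P.support, G.Adj v u) ∧
    (∀ u ∈ P.support, degIn G L u ≤ d)

/-- An `(s,d)`-dome in `G` with root `x`. -/
def IsDome (G : SimpleGraph V) (s d : ℕ) (x : V) : Prop :=
  IsDomeIn G Set.univ s d x

/-- An aligned `(s,d)`-dome in `G`: there is an ordering `ℓ 0, …, ℓ (s-1)` of the leaves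
and pairwise disjoint subpaths of `P` (given by index intervals `[lo i, hi i]` along the
support of `P`, occurring in order) containing all neighbours of the respective leaf. -/
def IsAlignedDome (G : SimpleGraph V) (s d : ℕ) : Prop :=
  ∃ (x : V) (S L : Set V) (a b : V) (P : G.Walk a b) (ℓ : Fin s → V) (lo hi : Fin s → ℕ),
    IsSubdividedStar G S x L ∧ L.ncard = s ∧
    IsInducedPathWalk G P ∧
    Disjoint S (suppSet P) ∧
    Anticomplete G (S \ L) (suppSet P) ∧
    (∀ v ∈ L, ∃ u ∈ P.support, G.Adj v u) ∧
    (∀ u ∈ P.support, degIn G L u ≤ d) ∧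
    Function.Injective ℓ ∧ (∀ i, ℓ i ∈ L) ∧
    (∀ i : Fin s, lo i ≤ hi i ∧ hi i < P.support.length) ∧
    (∀ i j : Fin s, i < j → hi i < lo j) ∧
    (∀ i : Fin s, ∀ u ∈ P.support, G.Adj (ℓ i) u →
      ∃ n : ℕ, lo i ≤ n ∧ n ≤ hi i ∧ P.support[n]? = some u)

/-- An `(x,z)`-tailed `q`-theta: a `q`-theta with ends `x,y` together with an induced
`y`–`z` path (the tail) meeting the theta only in `y` and with no edges between
the tail minus `y` and the theta minus `y`. -/
def IsTailedTheta (G : SimpleGraph V) {q : ℕ} (x z y : V)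
    (Q : Fin q → G.Walk x y) (P : G.Walk y z) : Prop :=
  x ≠ y ∧ y ≠ z ∧ x ≠ z ∧
  IsTheta G Q ∧
  IsInducedPathWalk G P ∧
  (suppSet P ∩ bananaVerts Q) ⊆ {y} ∧
  Anticomplete G (suppSet P \ {y}) (bananaVerts Q \ {y})

/-- The vertex set of a tailed theta. -/
def tailedThetaVerts {G : SimpleGraph V} {q : ℕ} {x z y : V}
    (Q : Fin q → G.Walk x y) (P : G.Walk y z) : Set V :=
  bananaVerts Q ∪ suppSet P

/-- An `(x,z)`-tailed `(k,q)`-kite: `k` tailed `q`-thetas, pairwise meeting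
exactly in `{x, z}`. -/
def IsKite (G : SimpleGraph V) (k q : ℕ) (x z : V) (y : Fin k → V)
    (Q : ∀ i : Fin k, Fin q → G.Walk x (y i)) (P : ∀ i : Fin k, G.Walk (y i) z) : Prop :=
  (∀ i, IsTailedTheta G x z (y i) (Q i) (P i)) ∧
  ∀ i j, i ≠ j →
    tailedThetaVerts (Q i) (P i) ∩ tailedThetaVerts (Q j) (P j) = {x, z}

/-- The vertex set of a kite. -/
def kiteVerts {G : SimpleGraph V} {k q : ℕ} {x z : V} {y : Fin k → V}
    (Q : ∀ i : Fin k, Fin q → G.Walk x (y i)) (P : ∀ i : Fin k, G.Walk (y i) z) : Set V :=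
  ⋃ i, tailedThetaVerts (Q i) (P i)

/-- A clean kite: every internal theta vertex has degree two in the subgraph induced
by the kite, and the tips `y i` form a stable set. -/
def IsCleanKite (G : SimpleGraph V) (k q : ℕ) (x z : V) (y : Fin k → V)
    (Q : ∀ i : Fin k, Fin q → G.Walk x (y i)) (P : ∀ i : Fin k, G.Walk (y i) z) : Prop :=
  IsKite G k q x z y Q P ∧
  (∀ i : Fin k, ∀ v ∈ bananaVerts (Q i), v ≠ x → v ≠ y i →
    degIn G (kiteVerts Q P) v = 2) ∧
  (∀ i j : Fin k, i ≠ j → ¬ G.Adj (y i) (y j))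

/-- `K` together with the injection `φ` and the path system `P` witnesses that `K`
is a subdivision of `H`. -/
def IsSubdivisionPathsVia {U W : Type} (K : SimpleGraph W) (H : SimpleGraph U)
    (φ : U → W) (P : ∀ u v : U, H.Adj u v → K.Walk (φ u) (φ v)) : Prop :=
  Function.Injective φ ∧
  (∀ u v (h : H.Adj u v), (P u v h).IsPath) ∧
  (∀ u v (h : H.Adj u v), P v u h.symm = (P u v h).reverse) ∧
  (∀ u v (h : H.Adj u v), ∀ w : U, φ w ∈ (P u v h).support → w = u ∨ w = v) ∧
  (∀ u v u' v' (h : H.Adj u v) (h' : H.Adj u' v'), s(u, v) ≠ s(u', v') →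
    ∀ a : W, a ∈ (P u v h).support → a ∈ (P u' v' h').support →
      (a = φ u ∨ a = φ v) ∧ (a = φ u' ∨ a = φ v')) ∧
  (∀ a : W, (∃ u, φ u = a) ∨ (∃ u v, ∃ h : H.Adj u v, a ∈ (P u v h).support)) ∧
  (∀ a b : W, K.Adj a b → ∃ u v, ∃ h : H.Adj u v, s(a, b) ∈ (P u v h).edges)

/-- `K` is a subdivision of `H` with branch vertices given by `φ`. -/
def IsSubdivisionVia {U W : Type} (K : SimpleGraph W) (H : SimpleGraph U)
    (φ : U → W) : Prop :=
  ∃ P, IsSubdivisionPathsVia K H φ P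

/-- `K` is a proper subdivision of `H` (every edge replaced by a path of length ≥ 2). -/
def IsProperSubdivisionVia {U W : Type} (K : SimpleGraph W) (H : SimpleGraph U)
    (φ : U → W) : Prop :=
  ∃ P, IsSubdivisionPathsVia K H φ P ∧ ∀ u v (h : H.Adj u v), 2 ≤ (P u v h).length

/-- `G` contains, as an induced subgraph, a subdivision of `H`. -/
def ContainsInducedSubdivision (G : SimpleGraph V) {U : Type} (H : SimpleGraph U) : Prop :=
  ∃ (S : Set V) (φ : U → ↥S), IsSubdivisionVia (G.induce S) H φ

/-- `G` contains, as an induced subgraph, a proper subdivision of `H`. -/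
def ContainsInducedProperSubdivision (G : SimpleGraph V) {U : Type} (H : SimpleGraph U) : Prop :=
  ∃ (S : Set V) (φ : U → ↥S), IsProperSubdivisionVia (G.induce S) H φ

/-- The `r`-by-`r` wall (hexagonal grid): `r` horizontal paths on `2r` vertices each,
with vertical edges between consecutive rows at columns of the appropriate parity. -/
def wall (r : ℕ) : SimpleGraph (Fin r × Fin (2 * r)) :=
  SimpleGraph.fromRel (fun a b =>
    (a.1 = b.1 ∧ (a.2 : ℕ) + 1 = (b.2 : ℕ)) ∨
    (a.2 = b.2 ∧ (a.1 : ℕ) + 1 = (b.1 : ℕ) ∧ ((a.1 : ℕ) + (a.2 : ℕ)) % 2 = 0))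

/-- The `1`-by-`r` wall: two horizontal paths, each with `r+1` vertices, joined by
`r+1` vertical edges (whose proper subdivisions are the `r+1` vertical paths),
forming `r` consecutive faces. -/
def wallOneRow (r : ℕ) : SimpleGraph (Fin 2 × Fin (r + 1)) :=
  SimpleGraph.fromRel (fun a b =>
    (a.1 = b.1 ∧ (a.2 : ℕ) + 1 = (b.2 : ℕ)) ∨ (a.2 = b.2 ∧ a.1 ≠ b.1))

/-- A tree decomposition of `G`: a tree `T` with bags `χ` covering all vertices and
edges, such that for each vertex the set of bags containing it induces a connected
subgraph of `T`. -/
def IsTreeDecomp {ι : Type} (G : SimpleGraph V) (T : SimpleGraph ι) (χ : ι → Finset V) : Prop :=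
  T.IsTree ∧
  (∀ v : V, ∃ i, v ∈ χ i) ∧
  (∀ u v : V, G.Adj u v → ∃ i, u ∈ χ i ∧ v ∈ χ i) ∧
  (∀ v : V, (T.induce {i | v ∈ χ i}).Connected)

/-- Vertices of the full binary tree of radius `r`: level `i` has `2^i` nodes. -/
def FbtVertex (r : ℕ) : Type := (i : Fin (r + 1)) × Fin (2 ^ (i : ℕ))

/-- The full binary tree of radius `r`: every non-leaf has two children,
and every leaf is at distance `r` from the root. -/
def fullBinaryTree (r : ℕ) : SimpleGraph (FbtVertex r) :=
  SimpleGraph.fromRel (fun a b =>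
    (a.1 : ℕ) + 1 = (b.1 : ℕ) ∧ (b.2 : ℕ) / 2 = (a.2 : ℕ))

/-- An `r`-fleet with anchor `x`, contained in `A`: an induced subdivision `T'` (on the
vertex set `S`) of the full binary tree of radius `r`, not containing `x`, such that the
neighbours of `x` in `T'` are exactly the (images of the) leaves of the binary tree. -/
def IsFleetIn (G : SimpleGraph V) (A : Set V) (r : ℕ) (x : V) : Prop :=
  x ∈ A ∧
  ∃ S : Set V, S ⊆ A ∧ x ∉ S ∧
    ∃ φ : FbtVertex r → ↥S,
      IsSubdivisionVia (G.induce S) (fullBinaryTree r) φ ∧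
      ∀ v : ↥S, (G.Adj x ↑v ↔ ∃ j : Fin (2 ^ r), φ ⟨Fin.last r, j⟩ = v)

/-- The set `A` induces a path in `G`. -/
def IsInducedPathSet (G : SimpleGraph V) (A : Set V) : Prop :=
  ∃ (a b : V) (p : G.Walk a b), IsInducedPathWalk G p ∧ A = suppSet p

/-- `G` contains an ample `(s,l)`-constellation as an induced subgraph: a stable set `S`
of size `s` and `l` pairwise disjoint, pairwise anticomplete induced paths, disjoint from
`S`, such that every vertex of `S` has a neighbour in every path, and (ampleness) no two
vertices of `S` have a common neighbour in the constellation. -/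
def HasAmpleConstellation (G : SimpleGraph V) (s l : ℕ) : Prop :=
  ∃ (S : Set V) (L : Fin l → Set V),
    S.ncard = s ∧
    (∀ a ∈ S, ∀ b ∈ S, a ≠ b → ¬ G.Adj a b) ∧
    (∀ i, IsInducedPathSet G (L i)) ∧
    (∀ i j, i ≠ j → Disjoint (L i) (L j) ∧ Anticomplete G (L i) (L j)) ∧
    (∀ i, Disjoint S (L i)) ∧
    (∀ a ∈ S, ∀ i, ∃ v ∈ L i, G.Adj a v) ∧
    (∀ a ∈ S, ∀ b ∈ S, a ≠ b → ∀ v, (∃ i, v ∈ L i) → ¬ (G.Adj a v ∧ G.Adj b v))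



section AuxWalk
variable {W : Type} {K : SimpleGraph W}

lemma getVert_mem_support {u v : W} (p : K.Walk u v) (i : ℕ) : p.getVert i ∈ p.support := by
  induction p generalizing i with
  | nil => cases i <;> simp [Walk.getVert]
  | cons h q ih =>
    cases i with
    | zero => simp [Walk.getVert]
    | succ n => simp only [Walk.getVert_cons_succ, Walk.support_cons, List.mem_cons]; exact Or.inr (ih n)

lemma support_getElem_eq_getVert {u v : W} (p : K.Walk u v) (i : ℕ) (h : i < p.support.length) :
    p.support[i] = p.getVert i := by
  induction p generalizing i with
  | nil =>
    have : i = 0 := by simpa using h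
    subst this; simp [Walk.getVert]
  | cons hadj q ih =>
    cases i with
    | zero => simp [Walk.getVert]
    | succ n =>
      simp only [Walk.support_cons, List.getElem_cons_succ, Walk.getVert_cons_succ]
      exact ih n (by simpa [Walk.support_cons] using h)

lemma getVert_injOn_of_nodup {u v : W} {p : K.Walk u v} (h : p.support.Nodup)
    {i j : ℕ} (hi : i ≤ p.length) (hj : j ≤ p.length) (hij : p.getVert i = p.getVert j) : i = j := by
  have hl : p.support.length = p.length + 1 := p.length_support
  have h1 : i < p.support.length := by omega
  have h2 : j < p.support.length := by omega
  rw [← support_getElem_eq_getVert p i h1, ← support_getElem_eq_getVert p j h2] at hij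
  exact List.Nodup.getElem_inj_iff h |>.mp hij

lemma mem_edges_iff_getVert {u v : W} (p : K.Walk u v) {x y : W} :
    s(x, y) ∈ p.edges ↔ ∃ i < p.length,
      (p.getVert i = x ∧ p.getVert (i+1) = y) ∨ (p.getVert i = y ∧ p.getVert (i+1) = x) := by
  induction p with
  | nil => simp
  | cons hadj q ih =>
    rename_i a b c
    simp only [Walk.edges_cons, List.mem_cons, Walk.length_cons]
    constructor
    · rintro (he | he)
      · refine ⟨0, by omega, ?_⟩
        rw [Sym2.eq_iff] at he
        rcases he with ⟨rfl, rfl⟩ | ⟨rfl, rfl⟩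
        · exact Or.inl ⟨rfl, by simp [Walk.getVert_cons_succ, Walk.getVert_zero]⟩
        · exact Or.inr ⟨rfl, by simp [Walk.getVert_cons_succ, Walk.getVert_zero]⟩
      · obtain ⟨i, hi, hcase⟩ := ih.mp he
        exact ⟨i + 1, by omega, by simpa [Walk.getVert_cons_succ] using hcase⟩
    · rintro ⟨i, hi, hcase⟩
      cases i with
      | zero =>
        left
        have hg0 : (Walk.cons hadj q).getVert 0 = a := rfl
        have hg1 : (Walk.cons hadj q).getVert 1 = b := by
          simp [Walk.getVert_cons_succ]
        rcases hcase with ⟨h1, h2⟩ | ⟨h1, h2⟩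
        · rw [hg0] at h1; rw [hg1] at h2; rw [← h1, ← h2]
        · rw [hg0] at h1; rw [hg1] at h2; rw [← h1, ← h2]; exact Sym2.eq_swap
      | succ n =>
        right
        exact ih.mpr ⟨n, by omega, by simpa [Walk.getVert_cons_succ] using hcase⟩

lemma edge_ends_not_mem {u v : W} {p : K.Walk u v} (hp : p.IsPath) (hl : 2 ≤ p.length) :
    s(u, v) ∉ p.edges := by
  intro he
  obtain ⟨i, hi, hcase⟩ := (mem_edges_iff_getVert p).mp he
  have hnd := hp.support_nodup
  rcases hcase with ⟨h1, h2⟩ | ⟨h1, h2⟩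
  · have : i = 0 := getVert_injOn_of_nodup hnd (by omega) (by omega)
      (by rw [h1, Walk.getVert_zero])
    subst this
    have : (1 : ℕ) = p.length := getVert_injOn_of_nodup hnd (by omega) le_rfl
      (by rw [h2, Walk.getVert_length])
    omega
  · have : i = p.length := getVert_injOn_of_nodup hnd (by omega) le_rfl
      (by rw [h1, Walk.getVert_length])
    omega

lemma mem_seg {u v : W} {p : K.Walk u v} (h : p.support.Nodup) {x : W}
    (hx : x ∈ p.support.dropLast) : x ∈ p.support ∧ x ≠ v := by
  have hne := p.support_ne_nil
  have hlast : p.support.getLast hne = v := p.getLast_support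
  have hsplit : p.support.dropLast ++ [v] = p.support := by
    have h2 := List.dropLast_append_getLast hne
    rw [hlast] at h2; exact h2
  constructor
  · rw [← hsplit]; exact List.mem_append_left _ hx
  · rw [← hsplit] at h
    have := (List.nodup_append'.mp h).2.2
    intro hxv
    exact this hx (by simp [hxv])

lemma seg_append {u v w : W} (p : K.Walk u v) (q : K.Walk v w) :
    (p.append q).support.dropLast = p.support.dropLast ++ q.support.dropLast := by
  have hp : p.support.dropLast ++ [v] = p.support := by
    have h2 := List.dropLast_append_getLast p.support_ne_nil
    rw [p.getLast_support] at h2; exact h2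
  cases q with
  | nil => simp [Walk.support_append]
  | cons h r =>
    rw [Walk.support_append]
    have h1 : (Walk.cons h r).support.tail = r.support := by simp
    rw [h1, List.dropLast_append_of_ne_nil r.support_ne_nil]
    have h2 : (Walk.cons h r).support.dropLast = v :: r.support.dropLast := by
      simp only [Walk.support_cons]
      exact List.dropLast_cons_of_ne_nil r.support_ne_nil
    rw [h2, ← hp]
    simp
    conv_lhs => rw [← hp]
    rw [List.append_assoc, List.singleton_append]

lemma hasInducedCycle_of_walk {x : W} (Wk : K.Walk x x) (h3 : 3 ≤ Wk.length)
    (hnd : Wk.support.dropLast.Nodup)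
    (hind : ∀ a b, a ∈ Wk.support → b ∈ Wk.support → K.Adj a b → s(a, b) ∈ Wk.edges) :
    HasInducedCycleOfLength K Wk.length := by
  set n := Wk.length with hn
  haveI : NeZero n := ⟨by omega⟩
  have hsl : Wk.support.length = n + 1 := Wk.length_support
  have hdl : Wk.support.dropLast.length = n := by simp [hsl]
  have hinj : ∀ i j : ℕ, i < n → j < n → Wk.getVert i = Wk.getVert j → i = j := by
    intro i j hi hj hij
    have e1 : Wk.support.dropLast[i]'(by omega) = Wk.getVert i := by
      rw [List.getElem_dropLast, support_getElem_eq_getVert]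
    have e2 : Wk.support.dropLast[j]'(by omega) = Wk.getVert j := by
      rw [List.getElem_dropLast, support_getElem_eq_getVert]
    have heq : Wk.support.dropLast[i]'(by omega) = Wk.support.dropLast[j]'(by omega) := by
      rw [e1, e2]; exact hij
    exact (List.Nodup.getElem_inj_iff hnd).mp heq
  have hinj' : ∀ i j : ℕ, i ≤ n → j < n → Wk.getVert i = Wk.getVert j → i % n = j := by
    intro i j hi hj hij
    rcases Nat.lt_or_ge i n with h | h
    · rw [Nat.mod_eq_of_lt h]; exact hinj i j h hj hij
    · have hi2 : i = n := by omega
      subst hi2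
      rw [Wk.getVert_length] at hij
      have h0 : Wk.getVert 0 = Wk.getVert j := by rw [Wk.getVert_zero]; exact hij
      have := hinj 0 j (by omega) hj h0
      rw [Nat.mod_self]; exact this.symm ▸ this
  have key1 : ∀ i : ℕ, i < n → K.Adj (Wk.getVert i) (Wk.getVert ((i+1) % n)) := by
    intro i hi
    rcases Nat.lt_or_ge (i+1) n with h | h
    · rw [Nat.mod_eq_of_lt h]; exact Wk.adj_getVert_succ hi
    · have h1 : i + 1 = n := by omega
      have h2 : Wk.getVert (i+1) = x := by
        rw [show i + 1 = Wk.length from h1]; exact Wk.getVert_length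
      rw [h1, Nat.mod_self, Wk.getVert_zero]
      have h3' := Wk.adj_getVert_succ hi
      rwa [h2] at h3'
  have key2 : ∀ i j : ℕ, i < n → j < n → K.Adj (Wk.getVert i) (Wk.getVert j) →
      (i+1) % n = j ∨ (j+1) % n = i := by
    intro i j hi hj hadj
    have he := hind _ _ (getVert_mem_support Wk i) (getVert_mem_support Wk j) hadj
    obtain ⟨k, hk, hcase⟩ := (mem_edges_iff_getVert Wk).mp he
    rcases hcase with ⟨h1, h2⟩ | ⟨h1, h2⟩
    · have hki : k = i := hinj k i hk hi h1
      subst hki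
      exact Or.inl (hinj' (k+1) j (by omega) hj h2)
    · have hkj : k = j := hinj k j hk hj h1
      subst hkj
      exact Or.inr (hinj' (k+1) i (by omega) hi h2)
  have h1n : 1 % n = 1 := Nat.mod_eq_of_lt (by omega)
  have hmod : ∀ i j : Fin n, j = i + 1 ↔ (i.val + 1) % n = j.val := by
    intro i j
    rw [Fin.ext_iff, Fin.add_def, Fin.val_one', h1n]
    exact eq_comm
  have hsub : ∀ i j : Fin n, (j - i = 1) ↔ j = i + 1 := by
    intro i j
    rw [sub_eq_iff_eq_add, add_comm]
  have hval1 : ((1 : Fin n) : ℕ) = 1 := by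
    rw [Fin.val_one', h1n]
  refine ⟨h3, ⟨⟨⟨fun i => Wk.getVert i.val, ?_⟩, ?_⟩⟩⟩
  · intro i j hij
    exact Fin.ext (hinj i.val j.val i.isLt j.isLt hij)
  · intro i j
    rw [cycleGraph_adj']
    constructor
    · intro hadj
      rcases key2 i.val j.val i.isLt j.isLt hadj with h | h
      · right
        have hj : j = i + 1 := (hmod i j).mpr h
        rw [hj, add_sub_cancel_left]
        exact hval1
      · left
        have hi2 : i = j + 1 := (hmod j i).mpr h
        rw [hi2, add_sub_cancel_left]
        exact hval1
    · intro hadj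
      rcases hadj with h | h
      · have heq : i = j + 1 := (hsub j i).mp (Fin.ext (h.trans hval1.symm))
        have hj : (j.val + 1) % n = i.val := (hmod j i).mp heq
        have := key1 j.val j.isLt
        rw [hj] at this
        exact this.symm
      · have heq : j = i + 1 := (hsub i j).mp (Fin.ext (h.trans hval1.symm))
        have hi2 : (i.val + 1) % n = j.val := (hmod i j).mp heq
        have := key1 i.val i.isLt
        rw [hi2] at this
        exact this

end AuxWalk


def col (m k : ℕ) : Fin (m+1) := ⟨k % (m+1), Nat.mod_lt _ (Nat.succ_pos m)⟩

lemma col_val {m k : ℕ} (h : k ≤ m) : (col m k).val = k := Nat.mod_eq_of_lt (by omega)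

lemma col_inj {m k k' : ℕ} (h : k ≤ m) (h' : k' ≤ m) (heq : col m k = col m k') : k = k' := by
  have := congrArg Fin.val heq
  rwa [col_val h, col_val h'] at this


lemma wv_eq_iff {m : ℕ} {i i' : Fin 2} {k k' : ℕ} (hk : k ≤ m) (hk' : k' ≤ m) :
    (((i, col m k) : Fin 2 × Fin (m+1)) = ((i', col m k') : Fin 2 × Fin (m+1)))
      ↔ (i = i' ∧ k = k') := by
  constructor
  · intro h
    rw [Prod.mk.injEq] at h
    exact ⟨h.1, col_inj hk hk' h.2⟩
  · rintro ⟨rfl, rfl⟩; rfl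

lemma adjRow {m : ℕ} (i : Fin 2) {k : ℕ} (h : k < m) :
    (wallOneRow m).Adj (i, col m k) (i, col m (k+1)) := by
  rw [wallOneRow, fromRel_adj]
  constructor
  · intro heq
    rw [wv_eq_iff (by omega : k ≤ m) (by omega : k + 1 ≤ m)] at heq
    omega
  · left; left
    refine ⟨rfl, ?_⟩
    show ((col m k : Fin (m+1)) : ℕ) + 1 = ((col m (k+1) : Fin (m+1)) : ℕ)
    rw [col_val (by omega : k ≤ m), col_val (by omega : k + 1 ≤ m)]

lemma adjV {m : ℕ} {k : ℕ} (h : k ≤ m) :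
    (wallOneRow m).Adj (0, col m k) (1, col m k) := by
  rw [wallOneRow, fromRel_adj]
  constructor
  · intro heq
    rw [wv_eq_iff h h] at heq
    exact absurd heq.1 (by decide)
  · left; right
    refine ⟨rfl, ?_⟩
    show (0 : Fin 2) ≠ (1 : Fin 2)
    decide

lemma rowEdge_ne {m : ℕ} {i i' : Fin 2} {k k' : ℕ} (hk : k + 1 ≤ m) (hk' : k' + 1 ≤ m)
    (hne : i ≠ i' ∨ k ≠ k') :
    s(((i, col m k) : Fin 2 × Fin (m+1)), (i, col m (k+1)))
      ≠ s((i', col m k'), (i', col m (k'+1))) := by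
  intro heq
  rw [Sym2.eq_iff] at heq
  rcases heq with ⟨h1, h2⟩ | ⟨h1, h2⟩
  · rw [wv_eq_iff (by omega : k ≤ m) (by omega : k' ≤ m)] at h1
    rw [wv_eq_iff (by omega : k + 1 ≤ m) (by omega : k' + 1 ≤ m)] at h2
    rcases hne with h | h
    · exact h h1.1
    · omega
  · rw [wv_eq_iff (by omega : k ≤ m) (by omega : k' + 1 ≤ m)] at h1
    rw [wv_eq_iff (by omega : k + 1 ≤ m) (by omega : k' ≤ m)] at h2
    omega

lemma rowEdge_ne_vEdge {m : ℕ} {i : Fin 2} {k j : ℕ} (hk : k + 1 ≤ m) (hj : j ≤ m) :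
    s(((i, col m k) : Fin 2 × Fin (m+1)), (i, col m (k+1)))
      ≠ s((0, col m j), (1, col m j)) := by
  intro heq
  rw [Sym2.eq_iff] at heq
  rcases heq with ⟨h1, h2⟩ | ⟨h1, h2⟩
  · rw [wv_eq_iff (by omega : k ≤ m) hj] at h1
    rw [wv_eq_iff (by omega : k + 1 ≤ m) hj] at h2
    rw [h1.1] at h2
    exact absurd h2.1 (by decide)
  · rw [wv_eq_iff (by omega : k ≤ m) hj] at h1
    rw [wv_eq_iff (by omega : k + 1 ≤ m) hj] at h2
    rw [h2.1] at h1
    exact absurd h1.1 (by decide)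

lemma vEdge_ne {m : ℕ} {j j' : ℕ} (hj : j ≤ m) (hj' : j' ≤ m) (hne : j ≠ j') :
    s(((0, col m j) : Fin 2 × Fin (m+1)), (1, col m j))
      ≠ s((0, col m j'), (1, col m j')) := by
  intro heq
  rw [Sym2.eq_iff] at heq
  rcases heq with ⟨h1, h2⟩ | ⟨h1, h2⟩
  · rw [wv_eq_iff hj hj'] at h1
    exact absurd h1.2 hne
  · rw [wv_eq_iff hj hj'] at h1
    exact absurd h1.1 (by decide)

section Construction
variable {W : Type} {K : SimpleGraph W} {m : ℕ} {φ : Fin 2 × Fin (m+1) → W}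

def eLen (P : ∀ u v, (wallOneRow m).Adj u v → K.Walk (φ u) (φ v)) (i : Fin 2) (k : ℕ) : ℕ :=
  if h : k < m then (P (i, col m k) (i, col m (k+1)) (adjRow i h)).length else 0

def vLen (P : ∀ u v, (wallOneRow m).Adj u v → K.Walk (φ u) (φ v)) (k : ℕ) : ℕ :=
  if h : k ≤ m then (P (0, col m k) (1, col m k) (adjV h)).length else 0

def rowW (P : ∀ u v, (wallOneRow m).Adj u v → K.Walk (φ u) (φ v)) (i : Fin 2) (a : ℕ) :
    (d : ℕ) → a + d ≤ m → K.Walk (φ (i, col m a)) (φ (i, col m (a+d)))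
  | 0, _ => Walk.nil
  | d+1, h => (rowW P i a d (by omega)).append
      (P (i, col m (a+d)) (i, col m (a+d+1)) (adjRow i (by omega)))

variable {P : ∀ u v, (wallOneRow m).Adj u v → K.Walk (φ u) (φ v)}

lemma rowW_length (i : Fin 2) (a : ℕ) : ∀ (d : ℕ) (h : a + d ≤ m),
    (rowW P i a d h).length = ∑ x ∈ Finset.range d, eLen P i (a+x)
  | 0, h => by simp [rowW]
  | d+1, h => by
    rw [rowW, Walk.length_append, rowW_length i a d (by omega), Finset.sum_range_succ]
    congr 1
    rw [eLen, dif_pos (by omega : a + d < m)]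

lemma rowW_support_subset (i : Fin 2) (a : ℕ) : ∀ (d : ℕ) (h : a + d ≤ m) (hd : 1 ≤ d)
    (x : W), x ∈ (rowW P i a d h).support →
    ∃ k, a ≤ k ∧ k + 1 ≤ a + d ∧ ∃ hk : k < m,
      x ∈ (P (i, col m k) (i, col m (k+1)) (adjRow i hk)).support
  | 0, h, hd, x => by omega
  | d+1, h, hd, x => by
    intro hx
    rw [rowW, Walk.mem_support_append_iff] at hx
    rcases hx with hx | hx
    · rcases Nat.eq_zero_or_pos d with rfl | hd'
      · simp [rowW] at hx
        exact ⟨a, le_refl a, by omega, by omega, by rw [hx]; exact Walk.start_mem_support _⟩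
      · obtain ⟨k, hk1, hk2, hk3, hk4⟩ := rowW_support_subset i a d (by omega) hd' x hx
        exact ⟨k, hk1, by omega, hk3, hk4⟩
    · exact ⟨a + d, by omega, by omega, by omega, hx⟩

lemma rowW_edges_subset (i : Fin 2) (a : ℕ) : ∀ (d : ℕ) (h : a + d ≤ m)
    (k : ℕ) (hk1 : a ≤ k) (hk2 : k + 1 ≤ a + d) (hk3 : k < m),
    ∀ e ∈ (P (i, col m k) (i, col m (k+1)) (adjRow i hk3)).edges, e ∈ (rowW P i a d h).edges
  | 0, h, k, hk1, hk2, hk3 => by omega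
  | d+1, h, k, hk1, hk2, hk3 => by
    intro e he
    rw [rowW, Walk.edges_append, List.mem_append]
    rcases Nat.lt_or_ge k (a+d) with hlt | hge
    · exact Or.inl (rowW_edges_subset i a d (by omega) k hk1 (by omega) hk3 e he)
    · have : k = a + d := by omega
      subst this
      exact Or.inr he

lemma meetP (hS : IsSubdivisionPathsVia K (wallOneRow m) φ P) {u v u' v' : Fin 2 × Fin (m+1)}
    (h : (wallOneRow m).Adj u v) (h' : (wallOneRow m).Adj u' v') (hne : s(u,v) ≠ s(u',v'))
    {x : W} (hx : x ∈ (P u v h).support) (hx' : x ∈ (P u' v' h').support) :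
    ∃ w, (w = u ∨ w = v) ∧ (w = u' ∨ w = v') ∧ x = φ w := by
  obtain ⟨h1, h2⟩ := hS.2.2.2.2.1 u v u' v' h h' hne x hx hx'
  rcases h1 with he1 | he1 <;> rcases h2 with he2 | he2
  · exact ⟨u, Or.inl rfl, Or.inl (hS.1 (he1.symm.trans he2)), he1⟩
  · exact ⟨u, Or.inl rfl, Or.inr (hS.1 (he1.symm.trans he2)), he1⟩
  · exact ⟨v, Or.inr rfl, Or.inl (hS.1 (he1.symm.trans he2)), he1⟩
  · exact ⟨v, Or.inr rfl, Or.inr (hS.1 (he1.symm.trans he2)), he1⟩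

lemma branchP (hS : IsSubdivisionPathsVia K (wallOneRow m) φ P) {u v : Fin 2 × Fin (m+1)}
    (h : (wallOneRow m).Adj u v) {w : Fin 2 × Fin (m+1)}
    (hw : φ w ∈ (P u v h).support) : w = u ∨ w = v :=
  hS.2.2.2.1 u v h w hw

lemma rowW_nodup (hS : IsSubdivisionPathsVia K (wallOneRow m) φ P) (i : Fin 2) (a : ℕ) :
    ∀ (d : ℕ) (h : a + d ≤ m), (rowW P i a d h).support.Nodup
  | 0, h => by simp [rowW]
  | d+1, h => by
    rw [rowW, Walk.support_append, List.nodup_append']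
    refine ⟨rowW_nodup hS i a d (by omega), ?_, ?_⟩
    · exact ((hS.2.1 _ _ _).support_nodup).sublist (List.tail_sublist _)
    · -- disjointness
      intro x hx hx'
      -- x in tail of support of the new edge path
      have hq := hS.2.1 (i, col m (a+d)) (i, col m (a+d+1)) (adjRow i (by omega))
      have hqs : (P (i, col m (a+d)) (i, col m (a+d+1)) (adjRow i (by omega : a+d < m))).support =
          φ (i, col m (a+d)) :: (P (i, col m (a+d)) (i, col m (a+d+1)) (adjRow i (by omega))).support.tail := by
        have := Walk.head_support (P (i, col m (a+d)) (i, col m (a+d+1)) (adjRow i (by omega : a+d < m)))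
        exact (List.cons_head_tail (Walk.support_ne_nil _)).symm.trans (by rw [this])
      have hxs : x ∈ (P (i, col m (a+d)) (i, col m (a+d+1)) (adjRow i (by omega : a+d < m))).support := by
        rw [hqs]; exact List.mem_cons_of_mem _ hx'
      have hxne : x ≠ φ (i, col m (a+d)) := by
        intro hxeq
        have hnd := hq.support_nodup
        rw [hqs] at hnd
        exact (List.nodup_cons.mp hnd).1 (hxeq ▸ hx')
      rcases Nat.eq_zero_or_pos d with rfl | hd'
      · simp [rowW] at hx
        -- x = φ (i, col m a), and a = a + 0
        exact hxne (by rw [hx]; norm_num)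
      · obtain ⟨k, hk1, hk2, hk3, hk4⟩ := rowW_support_subset i a d (by omega) hd' x hx
        obtain ⟨w, hw1, hw2, rfl⟩ := meetP hS _ _
          (rowEdge_ne (by omega) (by omega) (Or.inr (by omega : k ≠ a + d))) hk4 hxs
        rcases hw1 with rfl | rfl <;> rcases hw2 with hw | hw
        · -- (i, col k) = (i, col (a+d)) : k = a+d contradiction
          rw [wv_eq_iff (by omega) (by omega)] at hw
          omega
        · rw [wv_eq_iff (by omega) (by omega)] at hw
          omega
        · exact hxne (congrArg φ hw)
        · rw [wv_eq_iff (by omega) (by omega)] at hw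
          omega


lemma mem_seg_rev {u v : W} {p : K.Walk u v} (h : p.support.Nodup) {x : W}
    (hx : x ∈ p.reverse.support.dropLast) : x ∈ p.support ∧ x ≠ u := by
  have h2 : p.reverse.support.Nodup := by
    rw [Walk.support_reverse, List.nodup_reverse]; exact h
  obtain ⟨h3, h4⟩ := mem_seg h2 hx
  rw [Walk.support_reverse, List.mem_reverse] at h3
  exact ⟨h3, h4⟩

lemma crossRV (hS : IsSubdivisionPathsVia K (wallOneRow m) φ P) {i : Fin 2} {k j : ℕ}
    (hk : k + 1 ≤ m) (hj : j ≤ m) {x : W}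
    (hx : x ∈ (P (i, col m k) (i, col m (k+1)) (adjRow i hk)).support)
    (hx' : x ∈ (P (0, col m j) (1, col m j) (adjV hj)).support) :
    x = φ (i, col m j) ∧ (j = k ∨ j = k + 1) := by
  obtain ⟨w, hw1, hw2, rfl⟩ := meetP hS _ _ (rowEdge_ne_vEdge hk hj) hx hx'
  rcases hw1 with rfl | rfl
  · rcases hw2 with hw | hw
    · rw [wv_eq_iff (by omega) hj] at hw
      exact ⟨by rw [hw.2], Or.inl hw.2.symm⟩
    · rw [wv_eq_iff (by omega) hj] at hw
      exact ⟨by rw [hw.2], Or.inl hw.2.symm⟩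
  · rcases hw2 with hw | hw
    · rw [wv_eq_iff (by omega) hj] at hw
      exact ⟨by rw [hw.2], Or.inr (by omega)⟩
    · rw [wv_eq_iff (by omega) hj] at hw
      exact ⟨by rw [hw.2], Or.inr (by omega)⟩

lemma crossRRne (hS : IsSubdivisionPathsVia K (wallOneRow m) φ P) {i i' : Fin 2} {k k' : ℕ}
    (hk : k + 1 ≤ m) (hk' : k' + 1 ≤ m) (hii : i ≠ i') {x : W}
    (hx : x ∈ (P (i, col m k) (i, col m (k+1)) (adjRow i hk)).support)
    (hx' : x ∈ (P (i', col m k') (i', col m (k'+1)) (adjRow i' hk')).support) : False := by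
  obtain ⟨w, hw1, hw2, rfl⟩ := meetP hS _ _ (rowEdge_ne hk hk' (Or.inl hii)) hx hx'
  rcases hw1 with rfl | rfl <;> rcases hw2 with hw | hw <;>
    (rw [wv_eq_iff (by omega) (by omega)] at hw; exact hii hw.1)

lemma crossRRk (hS : IsSubdivisionPathsVia K (wallOneRow m) φ P) {i : Fin 2} {k k' : ℕ}
    (hk : k + 1 ≤ m) (hk' : k' + 1 ≤ m) (hne : k ≠ k') {x : W}
    (hx : x ∈ (P (i, col m k) (i, col m (k+1)) (adjRow i hk)).support)
    (hx' : x ∈ (P (i, col m k') (i, col m (k'+1)) (adjRow i hk')).support) :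
    (k' = k + 1 ∧ x = φ (i, col m k')) ∨ (k = k' + 1 ∧ x = φ (i, col m k)) := by
  obtain ⟨w, hw1, hw2, rfl⟩ := meetP hS _ _ (rowEdge_ne hk hk' (Or.inr hne)) hx hx'
  rcases hw1 with rfl | rfl <;> rcases hw2 with hw | hw <;>
      rw [wv_eq_iff (by omega) (by omega)] at hw
  · omega
  · exact Or.inr ⟨by omega, rfl⟩
  · exact Or.inl ⟨by omega, by rw [hw.2]⟩
  · omega

lemma crossVV (hS : IsSubdivisionPathsVia K (wallOneRow m) φ P) {j j' : ℕ}
    (hj : j ≤ m) (hj' : j' ≤ m) (hne : j ≠ j') {x : W}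
    (hx : x ∈ (P (0, col m j) (1, col m j) (adjV hj)).support)
    (hx' : x ∈ (P (0, col m j') (1, col m j') (adjV hj')).support) : False := by
  obtain ⟨w, hw1, hw2, rfl⟩ := meetP hS _ _ (vEdge_ne hj hj' hne) hx hx'
  rcases hw1 with rfl | rfl <;> rcases hw2 with hw | hw <;>
      rw [wv_eq_iff (by omega) (by omega)] at hw
  · omega
  · exact absurd hw.1 (by decide)
  · exact absurd hw.1 (by decide)
  · omega

def cycW (P : ∀ u v, (wallOneRow m).Adj u v → K.Walk (φ u) (φ v)) (a d : ℕ)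
    (h : a + d ≤ m) : K.Walk (φ (0, col m a)) (φ (0, col m a)) :=
  (rowW P 0 a d h).append ((P (0, col m (a+d)) (1, col m (a+d)) (adjV h)).append
    (((rowW P 1 a d h).reverse).append
      ((P (0, col m a) (1, col m a) (adjV (by omega))).reverse)))

lemma vLen_eq {k : ℕ} (hk : k ≤ m)
    (hadj : (wallOneRow m).Adj (0, col m k) (1, col m k)) :
    (P (0, col m k) (1, col m k) hadj).length = vLen P k := by
  rw [vLen, dif_pos hk]

lemma vLen_ge (hp2 : ∀ u v (h : (wallOneRow m).Adj u v), 2 ≤ (P u v h).length)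
    {k : ℕ} (hk : k ≤ m) : 2 ≤ vLen P k := by
  rw [vLen, dif_pos hk]; exact hp2 _ _ _

lemma cycW_length (a d : ℕ) (h : a + d ≤ m) :
    (cycW P a d h).length =
      (∑ x ∈ Finset.range d, eLen P 0 (a+x)) + (∑ x ∈ Finset.range d, eLen P 1 (a+x))
        + vLen P a + vLen P (a+d) := by
  rw [cycW]
  simp only [Walk.length_append, Walk.length_reverse]
  rw [rowW_length, rowW_length, vLen_eq h, vLen_eq (by omega : a ≤ m)]
  omega

lemma cycW_support_subset (a d : ℕ) (hd : 1 ≤ d) (h : a + d ≤ m) {x : W}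
    (hx : x ∈ (cycW P a d h).support) :
    (∃ i : Fin 2, ∃ k, a ≤ k ∧ k + 1 ≤ a + d ∧ ∃ hk : k < m,
        x ∈ (P (i, col m k) (i, col m (k+1)) (adjRow i hk)).support) ∨
      x ∈ (P (0, col m a) (1, col m a) (adjV (by omega : a ≤ m))).support ∨
      x ∈ (P (0, col m (a+d)) (1, col m (a+d)) (adjV h)).support := by
  rw [cycW, Walk.mem_support_append_iff, Walk.mem_support_append_iff,
    Walk.mem_support_append_iff] at hx
  rcases hx with hx | hx | hx | hx
  · obtain ⟨k, h1, h2, h3, h4⟩ := rowW_support_subset 0 a d h hd x hx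
    exact Or.inl ⟨0, k, h1, h2, h3, h4⟩
  · exact Or.inr (Or.inr hx)
  · rw [Walk.support_reverse, List.mem_reverse] at hx
    obtain ⟨k, h1, h2, h3, h4⟩ := rowW_support_subset 1 a d h hd x hx
    exact Or.inl ⟨1, k, h1, h2, h3, h4⟩
  · rw [Walk.support_reverse, List.mem_reverse] at hx
    exact Or.inr (Or.inl hx)

lemma cycW_edges_row (a d : ℕ) (h : a + d ≤ m) (i : Fin 2) {k : ℕ} (h1 : a ≤ k)
    (h2 : k + 1 ≤ a + d) (hk : k < m) {e : Sym2 W}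
    (he : e ∈ (P (i, col m k) (i, col m (k+1)) (adjRow i hk)).edges) :
    e ∈ (cycW P a d h).edges := by
  rw [cycW]
  simp only [Walk.edges_append, List.mem_append, Walk.edges_reverse, List.mem_reverse]
  fin_cases i
  · exact Or.inl (rowW_edges_subset 0 a d h k h1 h2 hk e he)
  · exact Or.inr (Or.inr (Or.inl (rowW_edges_subset 1 a d h k h1 h2 hk e he)))

lemma cycW_edges_v (a d : ℕ) (h : a + d ≤ m) {j : ℕ} (hj : j = a ∨ j = a + d)
    (hjm : j ≤ m) {e : Sym2 W}
    (he : e ∈ (P (0, col m j) (1, col m j) (adjV hjm)).edges) :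
    e ∈ (cycW P a d h).edges := by
  rw [cycW]
  simp only [Walk.edges_append, List.mem_append, Walk.edges_reverse, List.mem_reverse]
  rcases hj with rfl | rfl
  · exact Or.inr (Or.inr (Or.inr he))
  · exact Or.inr (Or.inl he)

lemma cycW_nodup (hS : IsSubdivisionPathsVia K (wallOneRow m) φ P) (a d : ℕ)
    (hd : 1 ≤ d) (h : a + d ≤ m) : (cycW P a d h).support.dropLast.Nodup := by
  have hnd0 : (rowW P 0 a d h).support.Nodup := rowW_nodup hS 0 a d h
  have hnd1 : (rowW P 1 a d h).support.Nodup := rowW_nodup hS 1 a d h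
  have hndv2 : (P (0, col m (a+d)) (1, col m (a+d)) (adjV h)).support.Nodup :=
    (hS.2.1 _ _ _).support_nodup
  have hndv1 : (P (0, col m a) (1, col m a) (adjV (by omega : a ≤ m))).support.Nodup :=
    (hS.2.1 _ _ _).support_nodup
  have M0 : ∀ x ∈ (rowW P 0 a d h).support.dropLast,
      (∃ k, a ≤ k ∧ k + 1 ≤ a + d ∧ ∃ hk : k < m,
        x ∈ (P (0, col m k) (0, col m (k+1)) (adjRow 0 hk)).support) ∧
        x ≠ φ (0, col m (a+d)) := by
    intro x hx
    obtain ⟨hx1, hx2⟩ := mem_seg hnd0 hx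
    exact ⟨rowW_support_subset 0 a d h hd x hx1, hx2⟩
  have M1 : ∀ x ∈ (rowW P 1 a d h).reverse.support.dropLast,
      (∃ k, a ≤ k ∧ k + 1 ≤ a + d ∧ ∃ hk : k < m,
        x ∈ (P (1, col m k) (1, col m (k+1)) (adjRow 1 hk)).support) ∧
        x ≠ φ (1, col m a) := by
    intro x hx
    obtain ⟨hx1, hx2⟩ := mem_seg_rev hnd1 hx
    exact ⟨rowW_support_subset 1 a d h hd x hx1, hx2⟩
  have MV2 : ∀ x ∈ (P (0, col m (a+d)) (1, col m (a+d)) (adjV h)).support.dropLast,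
      x ∈ (P (0, col m (a+d)) (1, col m (a+d)) (adjV h)).support ∧
        x ≠ φ (1, col m (a+d)) := fun x hx => mem_seg hndv2 hx
  have MV1 : ∀ x ∈ (P (0, col m a) (1, col m a)
        (adjV (by omega : a ≤ m))).reverse.support.dropLast,
      x ∈ (P (0, col m a) (1, col m a) (adjV (by omega : a ≤ m))).support ∧
        x ≠ φ (0, col m a) := fun x hx => mem_seg_rev hndv1 hx
  have hdec : (cycW P a d h).support.dropLast
      = (rowW P 0 a d h).support.dropLast ++
        ((P (0, col m (a+d)) (1, col m (a+d)) (adjV h)).support.dropLast ++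
          ((rowW P 1 a d h).reverse.support.dropLast ++
            (P (0, col m a) (1, col m a) (adjV (by omega : a ≤ m))).reverse.support.dropLast)) := by
    rw [cycW, seg_append, seg_append, seg_append]
  rw [hdec, List.nodup_append', List.nodup_append', List.nodup_append']
  refine ⟨(List.dropLast_sublist _).nodup hnd0,
    ⟨(List.dropLast_sublist _).nodup hndv2,
      ⟨(List.dropLast_sublist _).nodup (by rw [Walk.support_reverse, List.nodup_reverse]; exact hnd1),
        (List.dropLast_sublist _).nodup (by rw [Walk.support_reverse, List.nodup_reverse]; exact hndv1),
        ?_⟩, ?_⟩, ?_⟩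
  · -- q1rev seg vs v1rev seg
    intro x hx hx'
    obtain ⟨⟨k, hk1, hk2, hk3, hxk⟩, hne1⟩ := M1 x hx
    obtain ⟨hxv, hnev⟩ := MV1 x hx'
    obtain ⟨hxe, -⟩ := crossRV hS (by omega : k + 1 ≤ m) (by omega : a ≤ m) hxk hxv
    exact hne1 hxe
  · -- v2 seg vs (q1rev ++ v1rev)
    intro x hx hx'
    obtain ⟨hxv, hnev⟩ := MV2 x hx
    rcases List.mem_append.mp hx' with hx' | hx'
    · obtain ⟨⟨k, hk1, hk2, hk3, hxk⟩, hne1⟩ := M1 x hx'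
      obtain ⟨hxe, -⟩ := crossRV hS (by omega : k + 1 ≤ m) (by omega : a + d ≤ m) hxk hxv
      exact hnev hxe
    · obtain ⟨hxv1, hnev1⟩ := MV1 x hx'
      exact crossVV hS (by omega : a + d ≤ m) (by omega : a ≤ m) (by omega) hxv hxv1
  · -- q0 seg vs rest
    intro x hx hx'
    obtain ⟨⟨k, hk1, hk2, hk3, hxk⟩, hne0⟩ := M0 x hx
    rcases List.mem_append.mp hx' with hx' | hx'
    · obtain ⟨hxv, hnev⟩ := MV2 x hx'
      obtain ⟨hxe, -⟩ := crossRV hS (by omega : k + 1 ≤ m) (by omega : a + d ≤ m) hxk hxv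
      exact hne0 hxe
    rcases List.mem_append.mp hx' with hx' | hx'
    · obtain ⟨⟨k', hk1', hk2', hk3', hxk'⟩, hne1⟩ := M1 x hx'
      exact crossRRne hS (by omega : k + 1 ≤ m) (by omega : k' + 1 ≤ m) (by decide) hxk hxk'
    · obtain ⟨hxv1, hnev1⟩ := MV1 x hx'
      obtain ⟨hxe, -⟩ := crossRV hS (by omega : k + 1 ≤ m) (by omega : a ≤ m) hxk hxv1
      have : x = φ (0, col m a) := hxe
      exact hnev1 this

lemma edge_mem_of_eq (hS : IsSubdivisionPathsVia K (wallOneRow m) φ P)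
    {u v u₀ v₀ : Fin 2 × Fin (m+1)} (h : (wallOneRow m).Adj u v)
    (h₀ : (wallOneRow m).Adj u₀ v₀) (heq : s(u, v) = s(u₀, v₀)) :
    ∀ e ∈ (P u v h).edges, e ∈ (P u₀ v₀ h₀).edges := by
  intro e he
  rw [Sym2.eq_iff] at heq
  rcases heq with ⟨h1, h2⟩ | ⟨h1, h2⟩
  · subst h1; subst h2; exact he
  · subst h1; subst h2
    have hr : P v u h₀ = (P u v h₀.symm).reverse := hS.2.2.1 u v h₀.symm
    rw [hr, Walk.edges_reverse, List.mem_reverse]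
    exact he

lemma cycW_induced (hS : IsSubdivisionPathsVia K (wallOneRow m) φ P)
    (hp2 : ∀ u v (h : (wallOneRow m).Adj u v), 2 ≤ (P u v h).length) (a d : ℕ)
    (hd : 1 ≤ d) (h : a + d ≤ m) :
    ∀ x y, x ∈ (cycW P a d h).support → y ∈ (cycW P a d h).support →
      K.Adj x y → s(x, y) ∈ (cycW P a d h).edges := by
  intro x y hx hy hadj
  obtain ⟨u, v, huv, he⟩ := hS.2.2.2.2.2.2 x y hadj
  by_cases hused :
    (∃ i : Fin 2, ∃ k, a ≤ k ∧ k + 1 ≤ a + d ∧ ∃ hk : k < m,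
      s(u, v) = s((i, col m k), (i, col m (k+1)))) ∨
    s(u, v) = s(((0 : Fin 2), col m a), ((1 : Fin 2), col m a)) ∨
    s(u, v) = s(((0 : Fin 2), col m (a+d)), ((1 : Fin 2), col m (a+d)))
  · rcases hused with ⟨i, k, hk1, hk2, hk3, heq⟩ | heq | heq
    · exact cycW_edges_row a d h i hk1 hk2 hk3
        (edge_mem_of_eq hS huv (adjRow i hk3) heq _ he)
    · exact cycW_edges_v a d h (Or.inl rfl) (by omega : a ≤ m)
        (edge_mem_of_eq hS huv (adjV (by omega : a ≤ m)) heq _ he)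
    · exact cycW_edges_v a d h (Or.inr rfl) h
        (edge_mem_of_eq hS huv (adjV h) heq _ he)
  · exfalso
    have hne_row : ∀ (i : Fin 2) (k : ℕ), a ≤ k → k + 1 ≤ a + d → ∀ hk : k < m,
        s(((i, col m k) : Fin 2 × Fin (m+1)), (i, col m (k+1))) ≠ s(u, v) :=
      fun i k hk1 hk2 hk3 heq => hused (Or.inl ⟨i, k, hk1, hk2, hk3, heq.symm⟩)
    have hne_va : s((((0 : Fin 2), col m a) : Fin 2 × Fin (m+1)), ((1 : Fin 2), col m a)) ≠ s(u, v) :=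
      fun heq => hused (Or.inr (Or.inl heq.symm))
    have hne_vb : s((((0 : Fin 2), col m (a+d)) : Fin 2 × Fin (m+1)), ((1 : Fin 2), col m (a+d))) ≠ s(u, v) :=
      fun heq => hused (Or.inr (Or.inr heq.symm))
    have hxp : x ∈ (P u v huv).support := Walk.fst_mem_support_of_mem_edges _ he
    have hyp : y ∈ (P u v huv).support := Walk.snd_mem_support_of_mem_edges _ he
    have hwit : ∀ z, z ∈ (cycW P a d h).support → z ∈ (P u v huv).support →
        ∃ w, (w = u ∨ w = v) ∧ z = φ w := by
      intro z hz hzp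
      rcases cycW_support_subset a d hd h hz with ⟨i, k, hk1, hk2, hk3, hzk⟩ | hzv | hzv
      · obtain ⟨w, hw1, hw2, h3⟩ := meetP hS _ huv (hne_row i k hk1 hk2 hk3) hzk hzp
        exact ⟨w, hw2, h3⟩
      · obtain ⟨w, hw1, hw2, h3⟩ := meetP hS _ huv hne_va hzv hzp
        exact ⟨w, hw2, h3⟩
      · obtain ⟨w, hw1, hw2, h3⟩ := meetP hS _ huv hne_vb hzv hzp
        exact ⟨w, hw2, h3⟩
    obtain ⟨wx, hwx, hxe⟩ := hwit x hx hxp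
    obtain ⟨wy, hwy, hye⟩ := hwit y hy hyp
    have hxyne : wx ≠ wy := by
      intro hcontra
      exact hadj.ne (by rw [hxe, hye, hcontra])
    rcases hwx with rfl | rfl <;> rcases hwy with rfl | rfl
    · exact absurd rfl hxyne
    · rw [hxe, hye] at he
      exact edge_ends_not_mem (hS.2.1 _ _ huv) (hp2 _ _ huv) he
    · rw [hxe, hye, Sym2.eq_swap] at he
      exact edge_ends_not_mem (hS.2.1 _ _ huv) (hp2 _ _ huv) he
    · exact absurd rfl hxyne

lemma cycW_hasCycle (hS : IsSubdivisionPathsVia K (wallOneRow m) φ P)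
    (hp2 : ∀ u v (h : (wallOneRow m).Adj u v), 2 ≤ (P u v h).length) (a d : ℕ)
    (hd : 1 ≤ d) (h : a + d ≤ m) :
    HasInducedCycleOfLength K
      ((∑ x ∈ Finset.range d, eLen P 0 (a+x)) + (∑ x ∈ Finset.range d, eLen P 1 (a+x))
        + vLen P a + vLen P (a+d)) := by
  have h3 : 3 ≤ (cycW P a d h).length := by
    rw [cycW_length]
    have v1 := vLen_ge (P := P) hp2 (by omega : a ≤ m)
    have v2 := vLen_ge (P := P) hp2 (by omega : a + d ≤ m)
    omega
  have := hasInducedCycle_of_walk (cycW P a d h) h3 (cycW_nodup hS a d hd h)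
    (cycW_induced hS hp2 a d hd h)
  rwa [cycW_length] at this

end Construction

/-- For every positive integer `c`, if a graph `G` contains, as an
induced subgraph, a proper subdivision of the wall `W_{1×c²}` (two horizontal paths
joined by `c²+1` vertical paths), then `cl(G) ≥ c`. -/
theorem stmt_13 (c : ℕ) (hc : 0 < c) (V : Type) [Fintype V] (G : SimpleGraph V)
    (h : ContainsInducedProperSubdivision G (wallOneRow (c ^ 2))) :
    ClAtLeast G c := by
  obtain ⟨S, φ, P, hS, hp2⟩ := h
  set m := c ^ 2 with hmdef
  have hm1 : 1 ≤ m := by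
    have : 1 ≤ c := hc
    calc 1 = 1 ^ 2 := by ring
    _ ≤ c ^ 2 := Nat.pow_le_pow_left this 2
  have htrans : ∀ n, HasInducedCycleOfLength (G.induce S) n → HasInducedCycleOfLength G n := by
    rintro n ⟨h3, ⟨e⟩⟩
    exact ⟨h3, ⟨(Embedding.induce S).comp e⟩⟩
  have hcyc : ∀ a d : ℕ, 1 ≤ d → a + d ≤ m → HasInducedCycleOfLength G
      ((∑ x ∈ Finset.range d, eLen P 0 (a+x)) + (∑ x ∈ Finset.range d, eLen P 1 (a+x))
        + vLen P a + vLen P (a+d)) :=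
    fun a d hd hadm => htrans _ (cycW_hasCycle hS hp2 a d hd hadm)
  set L0 : ℕ → ℕ := fun j => (∑ x ∈ Finset.range j, eLen P 0 (0+x))
    + (∑ x ∈ Finset.range j, eLen P 1 (0+x)) + vLen P 0 + vLen P (0+j) with hL0def
  set Lm : ℕ → ℕ := fun i => (∑ x ∈ Finset.range (m-i), eLen P 0 (i+x))
    + (∑ x ∈ Finset.range (m-i), eLen P 1 (i+x)) + vLen P i + vLen P (i+(m-i)) with hLmdef
  set D : Finset ℕ := ((Finset.Icc 1 m).image L0) ∪ ((Finset.range m).image Lm) with hDdef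
  have hD : ∀ n ∈ D, HasInducedCycleOfLength G n := by
    intro n hn
    rw [hDdef, Finset.mem_union] at hn
    rcases hn with hn | hn
    · obtain ⟨j, hj, rfl⟩ := Finset.mem_image.mp hn
      rw [Finset.mem_Icc] at hj
      exact hcyc 0 j hj.1 (by omega)
    · obtain ⟨i, hi, rfl⟩ := Finset.mem_image.mp hn
      rw [Finset.mem_range] at hi
      exact hcyc i (m - i) (by omega) (by omega)
  rcases le_or_gt c D.card with hle | hlt
  · obtain ⟨T, hT, hTcard⟩ := Finset.exists_subset_card_eq hle
    exact ⟨T, hTcard, fun n hn => hD n (hT hn)⟩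
  · exfalso
    have hDne : 1 ≤ D.card := by
      have : L0 1 ∈ D := by
        rw [hDdef, Finset.mem_union]
        exact Or.inl (Finset.mem_image_of_mem _ (Finset.mem_Icc.mpr ⟨le_refl 1, hm1⟩))
      exact Finset.card_pos.mpr ⟨L0 1, this⟩
    have hc2 : 2 ≤ c := by omega
    set t : ℕ → ℤ := fun k => (eLen P 0 k : ℤ) + (eLen P 1 k : ℤ) with htdef
    set Sz : ℕ → ℤ := fun j => ∑ x ∈ Finset.range j, t x with hSzdef
    set A : ℕ → ℤ := fun j => Sz j + (vLen P j : ℤ) with hAdef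
    set B : ℕ → ℤ := fun j => Sz j - (vLen P j : ℤ) with hBdef
    have hL0 : ∀ j, ((L0 j : ℕ) : ℤ) = Sz j + (vLen P 0 : ℤ) + (vLen P j : ℤ) := by
      intro j
      simp only [hL0def, hSzdef, htdef, zero_add]
      push_cast
      rw [Finset.sum_add_distrib]
    have hLm : ∀ i, i < m → ((Lm i : ℕ) : ℤ) = Sz m - Sz i + (vLen P i : ℤ) + (vLen P m : ℤ) := by
      intro i hi
      have him : i + (m - i) = m := by omega
      have hshift : ∀ f : ℕ → ℤ, ∑ x ∈ Finset.range (m-i), f (i+x) = ∑ x ∈ Finset.Ico i m, f x := by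
        intro f
        rw [Finset.sum_Ico_eq_sum_range]
      have hIco : Sz i + ∑ x ∈ Finset.Ico i m, t x = Sz m := by
        simp only [hSzdef]
        exact Finset.sum_range_add_sum_Ico t (by omega)
      simp only [hLmdef, him]
      push_cast
      rw [hshift (fun x => (eLen P 0 x : ℤ)), hshift (fun x => (eLen P 1 x : ℤ))]
      have : ∑ x ∈ Finset.Ico i m, t x = (∑ x ∈ Finset.Ico i m, (eLen P 0 x : ℤ))
          + ∑ x ∈ Finset.Ico i m, (eLen P 1 x : ℤ) := by
        simp only [htdef]
        rw [← Finset.sum_add_distrib]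
      rw [this] at hIco
      linarith
    set DA : Finset ℤ := D.image (fun n : ℕ => (n : ℤ) - (vLen P 0 : ℤ)) with hDAdef
    set DB : Finset ℤ := D.image (fun n : ℕ => (Sz m + (vLen P m : ℤ)) - (n : ℤ)) with hDBdef
    have hA : ∀ j, 1 ≤ j → j ≤ m → A j ∈ DA := by
      intro j h1 h2
      have hmem : L0 j ∈ D := by
        rw [hDdef, Finset.mem_union]
        exact Or.inl (Finset.mem_image_of_mem _ (Finset.mem_Icc.mpr ⟨h1, h2⟩))
      refine Finset.mem_image.mpr ⟨L0 j, hmem, ?_⟩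
      rw [hL0 j]
      simp only [hAdef]
      ring
    have hB : ∀ i, i < m → B i ∈ DB := by
      intro i hi
      have hmem : Lm i ∈ D := by
        rw [hDdef, Finset.mem_union]
        exact Or.inr (Finset.mem_image_of_mem _ (Finset.mem_range.mpr hi))
      refine Finset.mem_image.mpr ⟨Lm i, hmem, ?_⟩
      rw [hLm i hi]
      simp only [hBdef]
      ring
    have htpos : ∀ k, k < m → (0 : ℤ) < t k := by
      intro k hk
      have h0 : 2 ≤ eLen P 0 k := by
        rw [eLen, dif_pos hk]; exact hp2 _ _ _
      simp only [htdef]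
      have : (2 : ℤ) ≤ (eLen P 0 k : ℤ) := by exact_mod_cast h0
      have h1 : (0 : ℤ) ≤ (eLen P 1 k : ℤ) := Int.natCast_nonneg _
      linarith
    have hSzmono : ∀ i j, i < j → j ≤ m → Sz i < Sz j := by
      intro i j hij hjm
      have hIco : Sz i + ∑ x ∈ Finset.Ico i j, t x = Sz j := by
        simp only [hSzdef]
        exact Finset.sum_range_add_sum_Ico t (by omega)
      have hpos : 0 < ∑ x ∈ Finset.Ico i j, t x := by
        apply Finset.sum_pos
        · intro k hk
          rw [Finset.mem_Ico] at hk
          exact htpos k (by omega)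
        · exact ⟨i, Finset.mem_Ico.mpr ⟨le_refl i, hij⟩⟩
      linarith
    have hcount : (Finset.Icc 1 (m-1)).card ≤ (DA ×ˢ DB).card := by
      apply Finset.card_le_card_of_injOn (fun i => (A i, B i))
      · intro i hi
        rw [Finset.mem_coe, Finset.mem_Icc] at hi
        exact Finset.mem_coe.mpr (Finset.mem_product.mpr ⟨hA i hi.1 (by omega), hB i (by omega)⟩)
      · intro i hi j hj hFij
        rw [Finset.mem_coe, Finset.mem_Icc] at hi hj
        have h1 : A i = A j := congrArg Prod.fst hFij
        have h2 : B i = B j := congrArg Prod.snd hFij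
        simp only [hAdef] at h1
        simp only [hBdef] at h2
        have hSz : Sz i = Sz j := by linarith
        rcases lt_trichotomy i j with hlt' | heq | hlt'
        · exact absurd hSz (ne_of_lt (hSzmono i j hlt' (by omega)))
        · exact heq
        · exact absurd hSz.symm (ne_of_lt (hSzmono j i hlt' (by omega)))
    have hIccCard : (Finset.Icc 1 (m-1)).card = m - 1 := by
      rw [Nat.card_Icc]
      omega
    have hprod : (DA ×ˢ DB).card = DA.card * DB.card := Finset.card_product _ _
    have hDA : DA.card ≤ D.card := Finset.card_image_le
    have hDB : DB.card ≤ D.card := Finset.card_image_le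
    have hfin : m - 1 ≤ (c-1) * (c-1) := by
      have hDc : D.card ≤ c - 1 := by omega
      calc m - 1 = (Finset.Icc 1 (m-1)).card := hIccCard.symm
      _ ≤ (DA ×ˢ DB).card := hcount
      _ = DA.card * DB.card := hprod
      _ ≤ (c-1) * (c-1) := Nat.mul_le_mul (le_trans hDA hDc) (le_trans hDB hDc)
    obtain ⟨k, rfl⟩ : ∃ k, c = k + 2 := ⟨c - 2, by omega⟩
    have e1 : (k+2) ^ 2 = k*k + 4*k + 4 := by ring
    have e2 : (k+2-1) * (k+2-1) = k*k + 2*k + 1 := by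
      have : k + 2 - 1 = k + 1 := by omega
      rw [this]; ring
    omega

end ClPaper
end

section
/- For all positive integers k, q, t, there is a constant f = f(k,q,t) such that every t-tidy graph G that contains an (x,z)-tailed (k,f)-kite contains an (x,z)-tailed (k,q)-kite K' = {(Θ'_{x,y_i}, P_i) : 1 ≤ i ≤ k} in which, for all distinct i and j, the interiors of the thetas are pairwise anticomplete, i.e., V(Θ'_{x,y_i})∖{x,y_i} and V(Θ'_{x,y_j})∖{x,y_j} are anticomplete. -/
open SimpleGraph

namespace ClPaper

variable {V : Type}

section Comb0
open Finset

lemma halve {α : Type} (E : α → α → Prop) :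
    ∀ (N : ℕ) (X Y : Finset α), N ≤ X.card →
    ∃ X' Y' : Finset α, X' ⊆ X ∧ Y' ⊆ Y ∧ X'.card = N ∧ Y.card ≤ Y'.card * 2 ^ N ∧
      ∀ x ∈ X', (∀ y ∈ Y', E x y) ∨ (∀ y ∈ Y', ¬ E x y) := by
  classical
  intro N
  induction N with
  | zero =>
    intro X Y _
    exact ⟨∅, Y, empty_subset _, subset_rfl, card_empty, by simp, by simp⟩
  | succ n ih =>
    intro X Y hX
    have hpos : 0 < X.card := lt_of_lt_of_le (Nat.succ_pos n) hX
    obtain ⟨x, hx⟩ := card_pos.mp hpos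
    have herase : n ≤ (X.erase x).card := by
      have := card_erase_of_mem hx
      omega
    have hsplit : (Y.filter (fun y => E x y)).card + (Y.filter (fun y => ¬ E x y)).card
        = Y.card := card_filter_add_card_filter_not (fun y => E x y)
    by_cases hbig : (Y.filter (fun y => ¬ E x y)).card ≤ (Y.filter (fun y => E x y)).card
    · obtain ⟨X'', Y', h1, h2, h3, h4, h5⟩ := ih (X.erase x) (Y.filter (fun y => E x y)) herase
      have hxX'' : x ∉ X'' := fun h => (mem_erase.mp (h1 h)).1 rfl
      refine ⟨insert x X'', Y', ?_, h2.trans (filter_subset _ _), ?_, ?_, ?_⟩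
      · intro a ha
        rcases mem_insert.mp ha with rfl | ha
        · exact hx
        · exact (erase_subset _ _) (h1 ha)
      · rw [card_insert_of_notMem hxX'', h3]
      · calc Y.card ≤ 2 * (Y.filter (fun y => E x y)).card := by omega
          _ ≤ 2 * (Y'.card * 2 ^ n) := by omega
          _ = Y'.card * 2 ^ (n+1) := by ring
      · intro a ha
        rcases mem_insert.mp ha with rfl | ha
        · exact Or.inl (fun y hy => (mem_filter.mp (h2 hy)).2)
        · exact h5 a ha
    · obtain ⟨X'', Y', h1, h2, h3, h4, h5⟩ := ih (X.erase x) (Y.filter (fun y => ¬ E x y)) herase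
      have hxX'' : x ∉ X'' := fun h => (mem_erase.mp (h1 h)).1 rfl
      refine ⟨insert x X'', Y', ?_, h2.trans (filter_subset _ _), ?_, ?_, ?_⟩
      · intro a ha
        rcases mem_insert.mp ha with rfl | ha
        · exact hx
        · exact (erase_subset _ _) (h1 ha)
      · rw [card_insert_of_notMem hxX'', h3]
      · calc Y.card ≤ 2 * (Y.filter (fun y => ¬ E x y)).card := by omega
          _ ≤ 2 * (Y'.card * 2 ^ n) := by omega
          _ = Y'.card * 2 ^ (n+1) := by ring
      · intro a ha
        rcases mem_insert.mp ha with rfl | ha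
        · exact Or.inr (fun y hy => (mem_filter.mp (h2 hy)).2)
        · exact h5 a ha

lemma pairStep {α : Type} (E : α → α → Prop) (t m : ℕ) (X Y : Finset α)
    (hX : t + m ≤ X.card) (hY : t * 2 ^ (t + m) ≤ Y.card) :
    (∃ A B : Finset α, A ⊆ X ∧ B ⊆ Y ∧ A.card = t ∧ B.card = t ∧
        ∀ a ∈ A, ∀ b ∈ B, E a b) ∨
    (∃ X' Y' : Finset α, X' ⊆ X ∧ Y' ⊆ Y ∧ X'.card = m ∧
        Y.card ≤ Y'.card * 2 ^ (t + m) ∧ ∀ a ∈ X', ∀ b ∈ Y', ¬ E a b) := by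
  classical
  obtain ⟨X', Y', hX'X, hY'Y, hcard, hYcard, hlab⟩ := halve E (t+m) X Y hX
  have hY't : t ≤ Y'.card := by
    have h2 : t * 2 ^ (t+m) ≤ Y'.card * 2 ^ (t+m) := le_trans hY hYcard
    exact Nat.le_of_mul_le_mul_right h2 (by positivity)
  set C := X'.filter (fun a => ∀ y ∈ Y', E a y) with hC
  by_cases hCt : t ≤ C.card
  · left
    obtain ⟨A, hA, hAcard⟩ := Finset.exists_subset_card_eq hCt
    obtain ⟨B, hB, hBcard⟩ := Finset.exists_subset_card_eq hY't
    refine ⟨A, B, (hA.trans (filter_subset _ _)).trans hX'X, (hB.trans hY'Y), hAcard, hBcard, ?_⟩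
    intro a ha b hb
    exact (mem_filter.mp (hA ha)).2 b (hB hb)
  · right
    set D := X'.filter (fun a => ¬ ∀ y ∈ Y', E a y) with hD
    have hDcard : m ≤ D.card := by
      have hsum : C.card + D.card = X'.card :=
        card_filter_add_card_filter_not (s := X') (p := fun a => ∀ y ∈ Y', E a y)
      omega
    obtain ⟨X'', hX''D, hX''card⟩ := Finset.exists_subset_card_eq hDcard
    refine ⟨X'', Y', (hX''D.trans (filter_subset _ _)).trans hX'X, hY'Y, hX''card, hYcard, ?_⟩
    intro a ha b hb
    have haD := mem_filter.mp (hX''D ha)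
    rcases hlab a haD.1 with h | h
    · exact absurd h haD.2
    · exact h b hb

end Comb0
section Comb
open Finset
variable {α : Type}
/-- Recursive size bound for the selection lemma. -/
def selF (t q : ℕ) : ℕ → ℕ
  | 0 => q
  | (k+1) => (t + q + selF t q k) * 2 ^ ((k+1) * (t + selF t q k))

lemma process {α : Type} (t m : ℕ) :
    ∀ (k : ℕ) (E : ℕ → α → α → Prop) (S : ℕ → Finset α) (Y₀ : Finset α),
    (∀ i, i < k → t + m ≤ (S i).card) →
    t * 2 ^ ((k+1) * (t+m)) ≤ Y₀.card →
    (∀ i, i < k → ¬ ∃ A B : Finset α, A ⊆ S i ∧ B ⊆ Y₀ ∧ A.card = t ∧ B.card = t ∧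
        ∀ a ∈ A, ∀ b ∈ B, E i a b) →
    ∃ (S' : ℕ → Finset α) (Y : Finset α),
      Y ⊆ Y₀ ∧ Y₀.card ≤ Y.card * 2 ^ (k * (t+m)) ∧
      ∀ i, i < k → S' i ⊆ S i ∧ (S' i).card = m ∧ ∀ a ∈ S' i, ∀ b ∈ Y, ¬ E i a b := by
  intro k
  induction k with
  | zero =>
    intro E S Y₀ _ _ _
    exact ⟨S, Y₀, subset_rfl, by simp, fun i hi => absurd hi (Nat.not_lt_zero i)⟩
  | succ k ih =>
    intro E S Y₀ hS hY hnc
    obtain ⟨S', Y, hYsub, hYcard, hprop⟩ := ih E S Y₀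
      (fun i hi => hS i (Nat.lt_succ_of_lt hi))
      (le_trans (Nat.mul_le_mul_left t (Nat.pow_le_pow_right (by norm_num)
        (Nat.mul_le_mul_right _ (Nat.le_succ (k+1))))) hY)
      (fun i hi => hnc i (Nat.lt_succ_of_lt hi))
    -- process pair (k, last)
    have hYk : t * 2 ^ (t + m) ≤ Y.card := by
      have h1 : t * 2 ^ (t+m) * 2 ^ (k * (t+m)) ≤ Y.card * 2 ^ (k * (t+m)) := by
        calc t * 2 ^ (t+m) * 2 ^ (k * (t+m)) = t * 2 ^ ((k+1) * (t+m)) := by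
              rw [mul_assoc, ← pow_add]; ring_nf
          _ ≤ Y₀.card := le_trans (Nat.mul_le_mul_left t (Nat.pow_le_pow_right (by norm_num)
              (Nat.mul_le_mul_right _ (Nat.le_succ (k+1))))) hY
          _ ≤ Y.card * 2 ^ (k * (t+m)) := hYcard
      exact Nat.le_of_mul_le_mul_right h1 (by positivity)
    rcases pairStep (E k) t m (S k) Y (hS k (Nat.lt_succ_self k)) hYk with
      ⟨A, B, hA, hB, hAc, hBc, hcomp⟩ | ⟨X', Y', hX'S, hY'Y, hX'c, hYc, hemp⟩
    · exact absurd ⟨A, B, hA, hB.trans hYsub, hAc, hBc, hcomp⟩ (hnc k (Nat.lt_succ_self k))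
    · refine ⟨fun i => if i = k then X' else S' i, Y', hY'Y.trans hYsub, ?_, ?_⟩
      · calc Y₀.card ≤ Y.card * 2 ^ (k * (t+m)) := hYcard
          _ ≤ (Y'.card * 2 ^ (t+m)) * 2 ^ (k * (t+m)) := Nat.mul_le_mul_right _ hYc
          _ = Y'.card * 2 ^ ((k+1) * (t+m)) := by rw [mul_assoc, ← pow_add]; ring_nf
      · intro i hi
        rcases Nat.lt_succ_iff_lt_or_eq.mp hi with hi' | rfl
        · have hne : i ≠ k := Nat.ne_of_lt hi'
          simp only [hne, if_false]
          obtain ⟨h1, h2, h3⟩ := hprop i hi'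
          exact ⟨h1, h2, fun a ha b hb => h3 a ha b (hY'Y hb)⟩
        · simp only [if_pos rfl]
          exact ⟨hX'S, hX'c, hemp⟩

lemma selF_ge (t q k : ℕ) : q ≤ selF t q k := by
  cases k with
  | zero => exact le_refl q
  | succ k =>
    calc q ≤ (t + q + selF t q k) * 1 := by omega
      _ ≤ (t + q + selF t q k) * 2 ^ ((k+1) * (t + selF t q k)) :=
          Nat.mul_le_mul_left _ (Nat.one_le_two_pow)

lemma select {α : Type} (t q : ℕ) :
    ∀ (k : ℕ) (S : ℕ → Finset α) (E : ℕ → ℕ → α → α → Prop),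
    (∀ i, i < k → selF t q k ≤ (S i).card) →
    (∀ i, i < k → ∀ j, j < k → i ≠ j →
      ¬ ∃ A B : Finset α, A ⊆ S i ∧ B ⊆ S j ∧ A.card = t ∧ B.card = t ∧
        ∀ a ∈ A, ∀ b ∈ B, E i j a b) →
    ∃ T : ℕ → Finset α, (∀ i, i < k → T i ⊆ S i ∧ (T i).card = q) ∧
      ∀ i j, i < j → j < k → ∀ a ∈ T i, ∀ b ∈ T j, ¬ E i j a b := by
  intro k
  induction k with
  | zero =>
    intro S E _ _
    exact ⟨fun _ => ∅, fun i hi => absurd hi (Nat.not_lt_zero i), fun i j _ hj => absurd hj (Nat.not_lt_zero j)⟩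
  | succ k ih =>
    intro S E hcard hnc
    set m := selF t q k with hm
    have hFsucc : selF t q (k+1) = (t + q + m) * 2 ^ ((k+1) * (t + m)) := rfl
    -- process pairs (i, k) for i < k
    obtain ⟨S', Y, hYsub, hYcard, hprop⟩ := process t m k (fun i => E i k) S (S k)
      (fun i hi => by
        have := hcard i (Nat.lt_succ_of_lt hi)
        have h2 : t + m ≤ selF t q (k+1) := by
          rw [hFsucc]
          calc t + m ≤ (t + q + m) * 1 := by omega
            _ ≤ _ := Nat.mul_le_mul_left _ Nat.one_le_two_pow
        omega)
      (by
        have := hcard k (Nat.lt_succ_self k)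
        have h2 : t * 2 ^ ((k+1)*(t+m)) ≤ selF t q (k+1) := by
          rw [hFsucc]; exact Nat.mul_le_mul_right _ (by omega)
        omega)
      (fun i hi => hnc i (Nat.lt_succ_of_lt hi) k (Nat.lt_succ_self k) (Nat.ne_of_lt hi))
    obtain ⟨T, hT, hTemp⟩ := ih S' E
      (fun i hi => le_of_eq (hprop i hi).2.1.symm)
      (fun i hi j hj hne himp => hnc i (Nat.lt_succ_of_lt hi) j (Nat.lt_succ_of_lt hj) hne (by
        obtain ⟨A, B, h1, h2, h3⟩ := himp
        exact ⟨A, B, h1.trans (hprop i hi).1, h2.trans (hprop j hj).1, h3⟩))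
    have hYq : q ≤ Y.card := by
      have h1 : q * 2 ^ (k * (t+m)) ≤ Y.card * 2 ^ (k * (t+m)) := by
        calc q * 2 ^ (k * (t+m)) ≤ (t+q+m) * 2 ^ ((k+1) * (t+m)) := by
              exact Nat.mul_le_mul (by omega) (Nat.pow_le_pow_right (by norm_num)
                (Nat.mul_le_mul_right _ (Nat.le_succ k)))
          _ ≤ (S k).card := by rw [← hFsucc]; exact hcard k (Nat.lt_succ_self k)
          _ ≤ Y.card * 2 ^ (k * (t+m)) := hYcard
      exact Nat.le_of_mul_le_mul_right h1 (by positivity)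
    obtain ⟨Tk, hTk, hTkc⟩ := Finset.exists_subset_card_eq hYq
    refine ⟨fun i => if i = k then Tk else T i, ?_, ?_⟩
    · intro i hi
      rcases Nat.lt_succ_iff_lt_or_eq.mp hi with hi' | rfl
      · have hne : i ≠ k := Nat.ne_of_lt hi'
        simp only [hne, if_false]
        exact ⟨(hT i hi').1.trans (hprop i hi').1, (hT i hi').2⟩
      · simp only [if_pos rfl]
        exact ⟨hTk.trans hYsub, hTkc⟩
    · intro i j hij hj a ha b hb
      rcases Nat.lt_succ_iff_lt_or_eq.mp hj with hj' | rfl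
      · have hni : i ≠ k := Nat.ne_of_lt (hij.trans hj')
        have hnj : j ≠ k := Nat.ne_of_lt hj'
        simp only [hni, hnj, if_false] at ha hb
        exact hTemp i j hij hj' a ha b hb
      · have hni : i ≠ j := Nat.ne_of_lt hij
        simp only [hni, if_false, if_pos rfl] at ha hb
        exact (hprop i hij).2.2 a ((hT i hij).1 ha) b (hTk hb)

end Comb

-- walk glue lemmas, to be inserted into work.lean
section Glue

variable {G : SimpleGraph V}

lemma reachable_induce {S : Set V} :
    ∀ {a b : V} (p : G.Walk a b) (hs : ∀ v ∈ p.support, v ∈ S),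
    (G.induce S).Reachable ⟨a, hs a p.start_mem_support⟩ ⟨b, hs b p.end_mem_support⟩ := by
  intro a b p
  induction p with
  | nil => intro hs; rfl
  | cons h q ih =>
    intro hs
    have hs' : ∀ v ∈ q.support, v ∈ S := fun v hv => hs v (Walk.support_cons _ _ ▸ List.mem_cons_of_mem _ hv)
    refine Reachable.trans ?_ (ih hs')
    exact Reachable.symm (Adj.reachable (by
      simp only [comap_adj, Function.Embedding.coe_subtype]
      exact h.symm))

lemma induce_suppSet_connected {a b : V} (p : G.Walk a b) :
    (G.induce (suppSet p)).Connected := by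
  classical
  have hne : Nonempty (suppSet p : Set V) := ⟨⟨a, p.start_mem_support⟩⟩
  refine ⟨fun u v => ?_⟩
  obtain ⟨u, hu⟩ := u
  obtain ⟨v, hv⟩ := v
  have hu' : u ∈ p.support := hu
  have hv' : v ∈ p.support := hv
  have h1 := reachable_induce (S := suppSet p) (p.takeUntil u hu')
    (fun w hw => Walk.support_takeUntil_subset _ _ hw)
  have h2 := reachable_induce (S := suppSet p) (p.takeUntil v hv')
    (fun w hw => Walk.support_takeUntil_subset _ _ hw)
  exact (h1.symm.trans h2)

/-- If `x` and `y` are adjacent, an induced path from `x` to `y` is the single edge. -/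
lemma path_single_of_adj {x y : V} (hxy : x ≠ y) (hadj : G.Adj x y) :
    ∀ (p : G.Walk x y), p.IsPath → s(x, y) ∈ p.edges → p = Walk.cons hadj Walk.nil := by
  intro p hp he
  cases p with
  | nil => exact absurd rfl hxy
  | @cons _ v _ h q =>
    rw [Walk.edges_cons, List.mem_cons] at he
    rcases he with he | he
    · have hv : v = y := by
        rw [Sym2.eq_iff] at he
        rcases he with ⟨-, h'⟩ | ⟨h1, h2⟩
        · exact h'.symm
        · exact absurd h2.symm hxy
      subst hv
      cases q with
      | nil => rfl
      | @cons _ w _ h2 q2 =>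
        exfalso
        have hnd := hp.support_nodup
        simp only [Walk.support_cons, List.nodup_cons] at hnd
        exact hnd.2.1 q2.end_mem_support
    · exfalso
      have hx : x ∈ q.support := Walk.fst_mem_support_of_mem_edges q he
      have hnd := hp.support_nodup
      simp only [Walk.support_cons, List.nodup_cons] at hnd
      exact hnd.1 hx

/-- In a banana with at least two paths, the two ends are non-adjacent. -/
lemma banana_not_adj {f : ℕ} {x y : V} {Q : Fin f → G.Walk x y}
    (hB : IsBanana G Q) (hf : 2 ≤ f) : ¬ G.Adj x y := by
  intro hadj
  obtain ⟨hxy, hinj, hind, _⟩ := hB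
  have h0 : (Q ⟨0, by omega⟩) = Walk.cons hadj Walk.nil := by
    refine path_single_of_adj hxy hadj _ (hind _).1 ?_
    exact (hind _).2 x (Walk.start_mem_support _) y (Walk.end_mem_support _) hadj
  have h1 : (Q ⟨1, by omega⟩) = Walk.cons hadj Walk.nil := by
    refine path_single_of_adj hxy hadj _ (hind _).1 ?_
    exact (hind _).2 x (Walk.start_mem_support _) y (Walk.end_mem_support _) hadj
  have := hinj (h0.trans h1.symm)
  simp at this

lemma interior_nonempty {x y : V} (p : G.Walk x y) (hxy : x ≠ y) (hna : ¬ G.Adj x y) :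
    (interiorSet p).Nonempty := by
  cases p with
  | nil => exact absurd rfl hxy
  | @cons _ v _ h q =>
    refine ⟨v, ?_, h.ne', ?_⟩
    · rw [Walk.support_cons]
      exact List.mem_cons_of_mem _ q.start_mem_support
    · rintro rfl
      exact hna h

lemma interior_eq_middle_supp {x y : V} (p : G.Walk x y) (hp : p.IsPath) (hxy : x ≠ y)
    (hna : ¬ G.Adj x y) :
    ∃ (v w : V) (mid : G.Walk v w), interiorSet p = suppSet mid := by
  cases p with
  | nil => exact absurd rfl hxy
  | @cons _ v _ h q =>
    have hvy : v ≠ y := by rintro rfl; exact hna h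
    obtain ⟨w, h2, r, hq⟩ : ∃ (w : V) (h2 : G.Adj y w) (r : G.Walk w v),
        q.reverse = Walk.cons h2 r := by
      cases hqr : q.reverse with
      | nil => exact absurd rfl hvy
      | cons h2 r => exact ⟨_, h2, r, rfl⟩
    refine ⟨v, w, r.reverse, ?_⟩
    have hqsupp : q.support = r.support.reverse ++ [y] := by
      have hq2 : q = (Walk.cons h2 r).reverse := by rw [← hq, Walk.reverse_reverse]
      rw [hq2, Walk.support_reverse, Walk.support_cons]
      simp
    have hnd := hp.support_nodup
    rw [Walk.support_cons, List.nodup_cons] at hnd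
    have hxq : x ∉ q.support := hnd.1
    have hqnd : q.support.Nodup := hnd.2
    have hyr : y ∉ r.support.reverse := by
      rw [hqsupp, List.nodup_append] at hqnd
      intro hy
      exact hqnd.2.2 y hy y (List.mem_singleton.mpr rfl) rfl
    ext u
    simp only [interiorSet, suppSet, Set.mem_setOf_eq, Walk.support_cons, List.mem_cons,
      Walk.support_reverse]
    constructor
    · rintro ⟨hu, hux, huy⟩
      rcases hu with rfl | hu
      · exact absurd rfl hux
      · rw [hqsupp] at hu
        rcases List.mem_append.mp hu with h' | h'
        · exact h'
        · exact absurd (List.mem_singleton.mp h') huy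
    · intro hu
      refine ⟨Or.inr ?_, ?_, ?_⟩
      · rw [hqsupp]; exact List.mem_append.mpr (Or.inl hu)
      · rintro rfl; exact hxq (by rw [hqsupp]; exact List.mem_append.mpr (Or.inl hu))
      · rintro rfl; exact hyr hu

lemma interior_connected {x y : V} (p : G.Walk x y) (hp : p.IsPath) (hxy : x ≠ y)
    (hna : ¬ G.Adj x y) : (G.induce (interiorSet p)).Connected := by
  obtain ⟨v, w, mid, heq⟩ := interior_eq_middle_supp p hp hxy hna
  rw [heq]
  exact induce_suppSet_connected mid

end Glue


section Glue2

variable {G : SimpleGraph V}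

lemma z_not_banana {q' : ℕ} {x z yy : V} {Q : Fin q' → G.Walk x yy} {P : G.Walk yy z}
    (h : IsTailedTheta G x z yy Q P) : z ∉ bananaVerts Q := by
  intro hz
  have h1 : z ∈ suppSet P ∩ bananaVerts Q := ⟨P.end_mem_support, hz⟩
  have h2 := h.2.2.2.2.2.1 h1
  exact h.2.1 (Set.mem_singleton_iff.mp h2).symm

lemma cross_complete_minor {k f t : ℕ} {x z : V} {y : Fin k → V}
    {Q : ∀ i : Fin k, Fin f → G.Walk x (y i)} {R : ∀ i : Fin k, G.Walk (y i) z}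
    (hKite : IsKite G k f x z y Q R) (hf : 2 ≤ f)
    (i j : Fin k) (hne : i ≠ j) (A B : Finset (Fin f)) (hAc : A.card = t) (hBc : B.card = t)
    (hcomp : ∀ a ∈ A, ∀ b ∈ B, ∃ u ∈ interiorSet (Q i a), ∃ v ∈ interiorSet (Q j b), G.Adj u v) :
    HasInducedMinor G (completeBipartiteGraph (Fin t) (Fin t)) := by
  obtain ⟨hTT, hIJ⟩ := hKite
  have hTheta : ∀ i', IsTheta G (Q i') := fun i' => (hTT i').2.2.2.1
  have hBan : ∀ i', IsBanana G (Q i') := fun i' => (hTheta i').1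
  have hnadj : ∀ i', ¬ G.Adj x (y i') := fun i' => banana_not_adj (hBan i') hf
  have hcross : ∀ a b v, v ∈ interiorSet (Q i a) → v ∈ interiorSet (Q j b) → False := by
    intro a b v hva hvb
    have h1 : v ∈ tailedThetaVerts (Q i) (R i) :=
      Set.mem_union_left _ (Set.mem_iUnion.mpr ⟨a, hva.1⟩)
    have h2 : v ∈ tailedThetaVerts (Q j) (R j) :=
      Set.mem_union_left _ (Set.mem_iUnion.mpr ⟨b, hvb.1⟩)
    have h3 : v ∈ ({x, z} : Set V) := by
      rw [← hIJ i j hne]; exact ⟨h1, h2⟩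
    rcases h3 with rfl | h3
    · exact hva.2.1 rfl
    · rw [Set.mem_singleton_iff] at h3
      subst h3
      exact z_not_banana (hTT i) (Set.mem_iUnion.mpr ⟨a, hva.1⟩)
  set eA : Fin t → Fin f := fun m => (A.orderIsoOfFin hAc m : Fin f) with heA
  set eB : Fin t → Fin f := fun m => (B.orderIsoOfFin hBc m : Fin f) with heB
  have heAinj : Function.Injective eA := fun m m' h =>
    (A.orderIsoOfFin hAc).injective (Subtype.ext h)
  have heBinj : Function.Injective eB := fun m m' h =>
    (B.orderIsoOfFin hBc).injective (Subtype.ext h)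
  have heAmem : ∀ m, eA m ∈ A := fun m => (A.orderIsoOfFin hAc m).2
  have heBmem : ∀ m, eB m ∈ B := fun m => (B.orderIsoOfFin hBc m).2
  refine ⟨Sum.elim (fun m => interiorSet (Q i (eA m))) (fun m => interiorSet (Q j (eB m))),
    ?_, ?_, ?_, ?_⟩
  · rintro (m | m)
    · exact interior_nonempty _ (hBan i).1 (hnadj i)
    · exact interior_nonempty _ (hBan j).1 (hnadj j)
  · rintro (m | m)
    · exact interior_connected _ ((hBan i).2.2.1 _).1 (hBan i).1 (hnadj i)
    · exact interior_connected _ ((hBan j).2.2.1 _).1 (hBan j).1 (hnadj j)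
  · rintro (m | m) (m' | m') hne'
    · have hmm : m ≠ m' := fun h => hne' (congrArg _ h)
      simp only [Sum.elim_inl]
      rw [Set.disjoint_left]
      intro v hv1 hv2
      rcases (hBan i).2.2.2 (eA m) (eA m') (fun h => hmm (heAinj h)) v hv1.1 hv2.1 with rfl | rfl
      · exact hv1.2.1 rfl
      · exact hv1.2.2 rfl
    · simp only [Sum.elim_inl, Sum.elim_inr]
      rw [Set.disjoint_left]
      intro v hv1 hv2
      exact hcross _ _ v hv1 hv2
    · simp only [Sum.elim_inl, Sum.elim_inr]
      rw [Set.disjoint_left]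
      intro v hv1 hv2
      exact hcross _ _ v hv2 hv1
    · have hmm : m ≠ m' := fun h => hne' (congrArg _ h)
      simp only [Sum.elim_inr]
      rw [Set.disjoint_left]
      intro v hv1 hv2
      rcases (hBan j).2.2.2 (eB m) (eB m') (fun h => hmm (heBinj h)) v hv1.1 hv2.1 with rfl | rfl
      · exact hv1.2.1 rfl
      · exact hv1.2.2 rfl
  · rintro (m | m) (m' | m') hne'
    · constructor
      · intro h
        exact absurd h (by simp)
      · rintro ⟨u, hu, v, hv, huv⟩
        have hmm : m ≠ m' := fun h => hne' (congrArg _ h)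
        exact absurd huv ((hTheta i).2 (eA m) (eA m') (fun h => hmm (heAinj h)) hu hv)
    · constructor
      · intro _
        obtain ⟨u, hu, v, hv, huv⟩ := hcomp (eA m) (heAmem m) (eB m') (heBmem m')
        exact ⟨u, hu, v, hv, huv⟩
      · intro _
        simp
    · constructor
      · intro _
        obtain ⟨u, hu, v, hv, huv⟩ := hcomp (eA m') (heAmem m') (eB m) (heBmem m)
        exact ⟨v, hv, u, hu, huv.symm⟩
      · intro _
        simp
    · constructor
      · intro h
        exact absurd h (by simp)
      · rintro ⟨u, hu, v, hv, huv⟩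
        have hmm : m ≠ m' := fun h => hne' (congrArg _ h)
        exact absurd huv ((hTheta j).2 (eB m) (eB m') (fun h => hmm (heBinj h)) hu hv)

end Glue2

/-- For all positive integers `k, q, t` there is a constant `f(k,q,t)`
such that every `t`-tidy graph containing an `(x,z)`-tailed `(k,f)`-kite contains an
`(x,z)`-tailed `(k,q)`-kite whose theta interiors are pairwise anticomplete. -/
theorem stmt_15 (k q t : ℕ) (hk : 0 < k) (hq : 0 < q) (ht : 0 < t) :
    ∃ f : ℕ, ∀ (V : Type) [Fintype V] (G : SimpleGraph V) (x z : V)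
      (y : Fin k → V) (Q : ∀ i : Fin k, Fin f → G.Walk x (y i))
      (R : ∀ i : Fin k, G.Walk (y i) z),
      Tidy G t → IsKite G k f x z y Q R →
      ∃ (y' : Fin k → V) (Q' : ∀ i : Fin k, Fin q → G.Walk x (y' i))
        (R' : ∀ i : Fin k, G.Walk (y' i) z),
        IsKite G k q x z y' Q' R' ∧
        ∀ i j, i ≠ j →
          Anticomplete G (bananaVerts (Q' i) \ {x, y' i})
            (bananaVerts (Q' j) \ {x, y' j}) := by
  classical
  refine ⟨selF t q k + 2, ?_⟩
  intro V _ G x z y Q R hTidy hKite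
  have hf2 : 2 ≤ selF t q k + 2 := by omega
  obtain ⟨hTT, hIJ⟩ := hKite
  have hTheta : ∀ i, IsTheta G (Q i) := fun i => (hTT i).2.2.2.1
  have hBan : ∀ i, IsBanana G (Q i) := fun i => (hTheta i).1
  have hxy : ∀ i, x ≠ y i := fun i => (hBan i).1
  -- the conflict relation between path interiors of distinct thetas
  obtain ⟨T, hT, hTemp⟩ := select (α := Fin (selF t q k + 2)) t q k (fun _ => Finset.univ)
    (fun i' j' a b => ∃ (hi : i' < k) (hj : j' < k),
      ∃ u ∈ interiorSet (Q ⟨i', hi⟩ a), ∃ v ∈ interiorSet (Q ⟨j', hj⟩ b), G.Adj u v)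
    (fun i' _ => by simpa using Nat.le_add_right (selF t q k) 2)
    (by
      rintro i' hi j' hj hne' ⟨A, B, -, -, hAc, hBc, hcomp⟩
      refine hTidy.2 (cross_complete_minor (G := G) ⟨hTT, hIJ⟩ hf2 ⟨i', hi⟩ ⟨j', hj⟩
        (fun h => hne' (congrArg Fin.val h)) A B hAc hBc ?_)
      intro a ha b hb
      obtain ⟨_, _, u, hu, v, hv, huv⟩ := hcomp a ha b hb
      exact ⟨u, hu, v, hv, huv⟩)
  have hTc : ∀ i : Fin k, (T i.val).card = q := fun i => (hT i.val i.isLt).2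
  set e : ∀ i : Fin k, Fin q → Fin (selF t q k + 2) :=
    fun i m => ((T i.val).orderIsoOfFin (hTc i) m : Fin (selF t q k + 2)) with he
  have he_mem : ∀ i m, e i m ∈ T i.val := fun i m => ((T i.val).orderIsoOfFin (hTc i) m).2
  have he_inj : ∀ i, Function.Injective (e i) := fun i m m' h =>
    ((T i.val).orderIsoOfFin (hTc i)).injective (Subtype.ext h)
  refine ⟨y, fun i m => Q i (e i m), R, ⟨?_, ?_⟩, ?_⟩
  · -- each restricted tailed theta
    intro i
    obtain ⟨h1, h2, h3, hTh, hP, hcap, hanti⟩ := hTT i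
    have hbsub : bananaVerts (fun m => Q i (e i m)) ⊆ bananaVerts (Q i) := by
      intro v hv
      obtain ⟨m, hm⟩ := Set.mem_iUnion.mp hv
      exact Set.mem_iUnion.mpr ⟨e i m, hm⟩
    refine ⟨h1, h2, h3, ⟨⟨h1, ?_, fun m => (hBan i).2.2.1 _, ?_⟩, ?_⟩, hP, ?_, ?_⟩
    · exact fun m m' h => he_inj i ((hBan i).2.1 h)
    · intro m m' hmm v hv1 hv2
      exact (hBan i).2.2.2 (e i m) (e i m') (fun h => hmm (he_inj i h)) v hv1 hv2
    · intro m m' hmm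
      exact hTh.2 (e i m) (e i m') (fun h => hmm (he_inj i h))
    · exact fun v hv => hcap ⟨hv.1, hbsub hv.2⟩
    · exact fun u hu v hv => hanti hu ⟨hbsub hv.1, hv.2⟩
  · -- pairwise intersections are {x, z}
    intro i j hne
    have hbsub : ∀ i' : Fin k,
        tailedThetaVerts (fun m => Q i' (e i' m)) (R i') ⊆ tailedThetaVerts (Q i') (R i') := by
      intro i' v hv
      rcases hv with hv | hv
      · obtain ⟨m, hm⟩ := Set.mem_iUnion.mp hv
        exact Set.mem_union_left _ (Set.mem_iUnion.mpr ⟨e i' m, hm⟩)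
      · exact Set.mem_union_right _ hv
    apply Set.Subset.antisymm
    · intro v hv
      rw [← hIJ i j hne]
      exact ⟨hbsub i hv.1, hbsub j hv.2⟩
    · intro v hv
      have hmem : ∀ i' : Fin k, v ∈ tailedThetaVerts (fun m => Q i' (e i' m)) (R i') := by
        intro i'
        rcases hv with rfl | hv
        · exact Set.mem_union_left _
            (Set.mem_iUnion.mpr ⟨⟨0, hq⟩, (Q i' (e i' ⟨0, hq⟩)).start_mem_support⟩)
        · rw [Set.mem_singleton_iff] at hv
          subst hv
          exact Set.mem_union_right _ (R i').end_mem_support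
      exact ⟨hmem i, hmem j⟩
  · -- interiors of distinct thetas are anticomplete
    intro i j hne u hu v hv hadj
    obtain ⟨hub, hux⟩ := hu
    obtain ⟨hvb, hvx⟩ := hv
    obtain ⟨m, hm⟩ := Set.mem_iUnion.mp hub
    obtain ⟨m', hm'⟩ := Set.mem_iUnion.mp hvb
    rw [Set.mem_insert_iff, Set.mem_singleton_iff, not_or] at hux hvx
    have huint : u ∈ interiorSet (Q i (e i m)) := ⟨hm, hux.1, hux.2⟩
    have hvint : v ∈ interiorSet (Q j (e j m')) := ⟨hm', hvx.1, hvx.2⟩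
    rcases lt_trichotomy i.val j.val with hlt | heq | hlt
    · exact hTemp i.val j.val hlt j.isLt (e i m) (he_mem i m) (e j m') (he_mem j m')
        ⟨i.isLt, j.isLt, u, huint, v, hvint, hadj⟩
    · exact hne (Fin.ext heq)
    · exact hTemp j.val i.val hlt i.isLt (e j m') (he_mem j m') (e i m) (he_mem i m)
        ⟨j.isLt, i.isLt, v, hvint, u, huint, hadj.symm⟩


end ClPaper
end
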